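/- arXiv:2410.04308 — 4 statements merged into one kernel-verified Lean document; each statement's English description precedes it below -/
import Mathlib

section
/- Let B be a finite Blaschke product of degree n and q ∈ [1, ∞). Then for every r ∈ (0,1), ∫₀^{2π} |B'(re^{it})|^q dt ≤ 2πn / (1 - r²)^{q-1}. -/
open Complex Metric MeasureTheory Real Set
open scoped Classical NNReal ENNReal

noncomputable def circInt (f : ℂ → ℂ) (p r : ℝ) : ℝ :=
  (∫ t in (0:ℝ)..(2*π), ‖f ((r : ℂ) * Complex.exp (t * Complex.I))‖ ^ p) / (2*π)

noncomputable def hardyNorm (p : ℝ) (f : ℂ → ℂ) : ℝ :=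
  ⨆ r : Ioo (0:ℝ) 1, (circInt f p (r : ℝ)) ^ (1/p)

/-- `f` belongs to the Hardy space `H^p` of the unit disk. -/
def MemHp (p : ℝ) (f : ℂ → ℂ) : Prop :=
  DifferentiableOn ℂ f (ball (0:ℂ) 1) ∧
    BddAbove (range fun r : Ioo (0:ℝ) 1 => (circInt f p (r : ℝ)) ^ (1/p))

noncomputable def supNorm (f : ℂ → ℂ) : ℝ := ⨆ z : ball (0:ℂ) 1, ‖f (z : ℂ)‖

/-- `f` belongs to `H^∞` of the unit disk. -/
def MemHinf (f : ℂ → ℂ) : Prop :=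
  DifferentiableOn ℂ f (ball (0:ℂ) 1) ∧ BddAbove (range fun z : ball (0:ℂ) 1 => ‖f (z : ℂ)‖)

/-- Number of solutions of `f z = w` in the unit disk, counted with multiplicity. -/
noncomputable def valCount (f : ℂ → ℂ) (w : ℂ) : ℝ≥0∞ :=
  ∑' z : ball (0:ℂ) 1,
    if h : AnalyticAt ℂ (fun ζ => f ζ - w) (z : ℂ) then (analyticOrderAt (fun ζ => f ζ - w) (z : ℂ) : ℝ≥0∞) else 0

/-- `f` is mean `n`-valent in the unit disk. -/
def MeanValent (n : ℝ) (f : ℂ → ℂ) : Prop :=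
  ∀ R > 0, (1/π) * ∫ r in (0:ℝ)..R, (∫ t in (0:ℝ)..(2*π),
      (valCount f ((r : ℂ) * Complex.exp (t * Complex.I))).toReal) * r ≤ n * R^2

noncomputable def maxMod (f : ℂ → ℂ) (r : ℝ) : ℝ := ⨆ z : sphere (0:ℂ) r, ‖f (z : ℂ)‖

/-- `B` is a finite Blaschke product of degree `n`. -/
def IsBlaschke (n : ℕ) (B : ℂ → ℂ) : Prop :=
  ∃ (c : ℂ) (a : Fin n → ℂ), ‖c‖ = 1 ∧ (∀ k, ‖a k‖ < 1) ∧
    ∀ z, B z = c * ∏ k, (z - a k) / (1 - (starRingEnd ℂ) (a k) * z)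

/-- `g` coincides on the unit disk with a rational function of degree at most `n`
whose poles lie outside the closed unit disk. -/
def IsRatOut (n : ℕ) (g : ℂ → ℂ) : Prop :=
  ∃ P Q : Polynomial ℂ, P.natDegree ≤ n ∧ Q.natDegree ≤ n ∧
    (∀ z : ℂ, ‖z‖ ≤ 1 → Q.eval z ≠ 0) ∧ ∀ z ∈ ball (0:ℂ) 1, g z = P.eval z / Q.eval z


lemma myNormExp (t : ℝ) : ‖Complex.exp (↑t * Complex.I)‖ = 1 := by
  simpa using Complex.norm_exp_ofReal_mul_I t

lemma myNormSqLtOne {a : ℂ} (ha : ‖a‖ < 1) : Complex.normSq a < 1 := by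
  rw [Complex.normSq_eq_norm_sq]
  nlinarith [norm_nonneg a]

lemma myDenomNe {a z : ℂ} (ha : ‖a‖ < 1) (hz : ‖z‖ ≤ 1) :
    1 - (starRingEnd ℂ) a * z ≠ 0 := by
  intro h
  have h1 : (1 : ℂ) = (starRingEnd ℂ) a * z := by linear_combination h
  have h2 : (1:ℝ) = ‖(starRingEnd ℂ) a * z‖ := by rw [← h1]; simp
  have : ‖(starRingEnd ℂ) a * z‖ ≤ ‖a‖ * 1 := by
    rw [norm_mul, RCLike.norm_conj]
    exact mul_le_mul_of_nonneg_left hz (norm_nonneg a)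
  nlinarith

lemma myKeyId (a z : ℂ) :
    Complex.normSq (1 - (starRingEnd ℂ) a * z) - Complex.normSq (z - a)
      = (1 - Complex.normSq a) * (1 - Complex.normSq z) := by
  simp only [Complex.normSq_apply, Complex.sub_re, Complex.sub_im, Complex.mul_re,
    Complex.mul_im, Complex.one_re, Complex.one_im, Complex.conj_re, Complex.conj_im]
  ring

lemma myNumLe {a z : ℂ} (ha : ‖a‖ < 1) (hz : ‖z‖ ≤ 1) :
    ‖z - a‖ ≤ ‖1 - (starRingEnd ℂ) a * z‖ := by
  have h1 : Complex.normSq a ≤ 1 := (myNormSqLtOne ha).le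
  have h2 : Complex.normSq z ≤ 1 := by
    rw [Complex.normSq_eq_norm_sq]; nlinarith [norm_nonneg z]
  have := myKeyId a z
  have hle : Complex.normSq (z - a) ≤ Complex.normSq (1 - (starRingEnd ℂ) a * z) := by
    nlinarith
  rw [Complex.norm_def, Complex.norm_def]
  exact Real.sqrt_le_sqrt hle

lemma myFactorLe {a z : ℂ} (ha : ‖a‖ < 1) (hz : ‖z‖ ≤ 1) :
    ‖(z - a) / (1 - (starRingEnd ℂ) a * z)‖ ≤ 1 := by
  rw [norm_div]
  exact div_le_one_of_le₀ (myNumLe ha hz) (norm_nonneg _)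

lemma myTermNorm {a w : ℂ} (ha : ‖a‖ < 1) :
    ‖(1 - (Complex.normSq a : ℂ)) / (1 - (starRingEnd ℂ) a * w)^2‖
      = (1 - Complex.normSq a) / Complex.normSq (1 - (starRingEnd ℂ) a * w) := by
  rw [norm_div, norm_pow]
  congr 1
  · rw [show (1 - (Complex.normSq a : ℂ)) = ((1 - Complex.normSq a : ℝ) : ℂ) by push_cast; ring]
    rw [Complex.norm_real]
    exact abs_of_nonneg (by linarith [myNormSqLtOne ha])
  · rw [Complex.sq_norm]

lemma myXsq {a w : ℂ} :
    ‖(w - a) / (1 - (starRingEnd ℂ) a * w)‖ ^ 2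
      = Complex.normSq (w - a) / Complex.normSq (1 - (starRingEnd ℂ) a * w) := by
  rw [norm_div, div_pow, Complex.sq_norm,
    Complex.sq_norm]

lemma myBound1 {n : ℕ} (c : ℂ) (a : Fin n → ℂ) (hc : ‖c‖ = 1) (ha : ∀ k, ‖a k‖ < 1)
    {w : ℂ} (hw : ‖w‖ < 1) :
    ‖c * ∑ k, (1 - (Complex.normSq (a k) : ℂ)) / (1 - (starRingEnd ℂ) (a k) * w)^2 *
      ∏ j ∈ Finset.univ.erase k, (w - a j) / (1 - (starRingEnd ℂ) (a j) * w)‖ ≤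
      ∑ k, (1 - Complex.normSq (a k)) / Complex.normSq (1 - (starRingEnd ℂ) (a k) * w) := by
  rw [norm_mul, hc, one_mul]
  refine (norm_sum_le _ _).trans ?_
  apply Finset.sum_le_sum
  intro k _
  rw [norm_mul, myTermNorm (ha k)]
  have h1 : ‖∏ j ∈ Finset.univ.erase k, (w - a j) / (1 - (starRingEnd ℂ) (a j) * w)‖ ≤ 1 := by
    rw [norm_prod]
    exact Finset.prod_le_one (fun j _ => norm_nonneg _) (fun j _ => myFactorLe (ha j) hw.le)
  have h2 : 0 ≤ (1 - Complex.normSq (a k)) / Complex.normSq (1 - (starRingEnd ℂ) (a k) * w) :=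
    div_nonneg (by linarith [myNormSqLtOne (ha k)]) (Complex.normSq_nonneg _)
  calc (1 - Complex.normSq (a k)) / Complex.normSq (1 - (starRingEnd ℂ) (a k) * w) *
        ‖∏ j ∈ Finset.univ.erase k, (w - a j) / (1 - (starRingEnd ℂ) (a j) * w)‖
      ≤ (1 - Complex.normSq (a k)) / Complex.normSq (1 - (starRingEnd ℂ) (a k) * w) * 1 :=
        mul_le_mul_of_nonneg_left h1 h2
    _ = _ := mul_one _

lemma myTele {ι : Type*} [DecidableEq ι] (s : Finset ι) (x : ι → ℝ)
    (h0 : ∀ i ∈ s, 0 ≤ x i) (h1 : ∀ i ∈ s, x i ≤ 1) :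
    ∑ k ∈ s, (1 - x k ^ 2) * ∏ j ∈ s.erase k, x j ≤ 1 := by
  suffices h : ∑ k ∈ s, (1 - x k ^ 2) * ∏ j ∈ s.erase k, x j ≤ 1 - (∏ j ∈ s, x j)^2 by
    nlinarith [sq_nonneg (∏ j ∈ s, x j)]
  classical
  induction s using Finset.induction_on with
  | empty => simp
  | insert a s ha ih =>
    have hP0 : 0 ≤ ∏ j ∈ s, x j := Finset.prod_nonneg fun i hi => h0 i (Finset.mem_insert_of_mem hi)
    have hP1 : ∏ j ∈ s, x j ≤ 1 :=
      Finset.prod_le_one (fun i hi => h0 i (Finset.mem_insert_of_mem hi))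
        (fun i hi => h1 i (Finset.mem_insert_of_mem hi))
    have hb0 : 0 ≤ x a := h0 a (Finset.mem_insert_self a s)
    have hb1 : x a ≤ 1 := h1 a (Finset.mem_insert_self a s)
    have hS := ih (fun i hi => h0 i (Finset.mem_insert_of_mem hi))
      (fun i hi => h1 i (Finset.mem_insert_of_mem hi))
    rw [Finset.sum_insert ha, Finset.prod_insert ha, Finset.erase_insert ha]
    have hrw : ∀ k ∈ s, (1 - x k ^ 2) * ∏ j ∈ (insert a s).erase k, x j
        = x a * ((1 - x k ^ 2) * ∏ j ∈ s.erase k, x j) := by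
      intro k hk
      have hka : k ≠ a := by rintro rfl; exact ha hk
      rw [Finset.erase_insert_of_ne hka.symm,
        Finset.prod_insert (fun h => ha (Finset.mem_of_mem_erase h))]
      ring
    rw [Finset.sum_congr rfl hrw, ← Finset.mul_sum]
    set P := ∏ j ∈ s, x j
    set S := ∑ k ∈ s, (1 - x k ^ 2) * ∏ j ∈ s.erase k, x j
    have hbP : x a * P ≤ 1 := by nlinarith
    have h₁ : 0 ≤ x a * (1 - P ^ 2 - S) := mul_nonneg hb0 (by linarith)
    have h₂ : 0 ≤ (1 - x a) * (1 - P) * (1 - x a * P) :=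
      mul_nonneg (mul_nonneg (by linarith) (by linarith)) (by linarith)
    nlinarith [h₁, h₂]

lemma myBound2 {n : ℕ} (c : ℂ) (a : Fin n → ℂ) (hc : ‖c‖ = 1) (ha : ∀ k, ‖a k‖ < 1)
    {w : ℂ} (hw : ‖w‖ < 1) :
    ‖c * ∑ k, (1 - (Complex.normSq (a k) : ℂ)) / (1 - (starRingEnd ℂ) (a k) * w)^2 *
      ∏ j ∈ Finset.univ.erase k, (w - a j) / (1 - (starRingEnd ℂ) (a j) * w)‖ ≤
      (1 - ‖w‖^2)⁻¹ := by
  have hnw : Complex.normSq w = ‖w‖^2 := by rw [Complex.normSq_eq_norm_sq]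
  have hw2 : 0 < 1 - ‖w‖^2 := by nlinarith [norm_nonneg w]
  set x : Fin n → ℝ := fun j => ‖(w - a j) / (1 - (starRingEnd ℂ) (a j) * w)‖ with hxdef
  have hx0 : ∀ j, 0 ≤ x j := fun j => norm_nonneg _
  have hx1 : ∀ j, x j ≤ 1 := fun j => myFactorLe (ha j) hw.le
  rw [norm_mul, hc, one_mul]
  have hterm : ∀ k : Fin n,
      ‖(1 - (Complex.normSq (a k) : ℂ)) / (1 - (starRingEnd ℂ) (a k) * w)^2 *
        ∏ j ∈ Finset.univ.erase k, (w - a j) / (1 - (starRingEnd ℂ) (a j) * w)‖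
      = (1 - ‖w‖^2)⁻¹ * ((1 - x k ^ 2) * ∏ j ∈ Finset.univ.erase k, x j) := by
    intro k
    rw [norm_mul, myTermNorm (ha k), norm_prod]
    have hden : (0:ℝ) < Complex.normSq (1 - (starRingEnd ℂ) (a k) * w) :=
      Complex.normSq_pos.2 (myDenomNe (ha k) hw.le)
    have hkey := myKeyId (a k) w
    have heq : (1 - Complex.normSq (a k)) / Complex.normSq (1 - (starRingEnd ℂ) (a k) * w)
        = (1 - ‖w‖^2)⁻¹ * (1 - x k ^ 2) := by
      have h1t : (0:ℝ) < 1 - Complex.normSq w := by rw [hnw]; exact hw2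
      rw [hxdef]
      simp only []
      rw [myXsq, ← hnw]
      rw [one_sub_div hden.ne', hkey, mul_comm (1 - Complex.normSq (a k)), mul_div_assoc,
        inv_mul_cancel_left₀ h1t.ne']
    rw [heq]
    ring
  calc ‖∑ k, (1 - (Complex.normSq (a k) : ℂ)) / (1 - (starRingEnd ℂ) (a k) * w)^2 *
        ∏ j ∈ Finset.univ.erase k, (w - a j) / (1 - (starRingEnd ℂ) (a j) * w)‖
      ≤ ∑ k, ‖(1 - (Complex.normSq (a k) : ℂ)) / (1 - (starRingEnd ℂ) (a k) * w)^2 *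
        ∏ j ∈ Finset.univ.erase k, (w - a j) / (1 - (starRingEnd ℂ) (a j) * w)‖ :=
        norm_sum_le _ _
    _ = (1 - ‖w‖^2)⁻¹ * ∑ k, (1 - x k ^ 2) * ∏ j ∈ Finset.univ.erase k, x j := by
        rw [Finset.mul_sum]; exact Finset.sum_congr rfl fun k _ => hterm k
    _ ≤ (1 - ‖w‖^2)⁻¹ * 1 := by
        apply mul_le_mul_of_nonneg_left _ (by positivity)
        exact myTele Finset.univ x (fun i _ => hx0 i) (fun i _ => hx1 i)
    _ = (1 - ‖w‖^2)⁻¹ := mul_one _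

lemma myFactorDeriv {a z : ℂ} (h : 1 - (starRingEnd ℂ) a * z ≠ 0) :
    HasDerivAt (fun w => (w - a) / (1 - (starRingEnd ℂ) a * w))
      ((1 - (Complex.normSq a : ℂ)) / (1 - (starRingEnd ℂ) a * z)^2) z := by
  have h1 : HasDerivAt (fun w : ℂ => w - a) 1 z := (hasDerivAt_id z).sub_const a
  have h2 : HasDerivAt (fun w : ℂ => 1 - (starRingEnd ℂ) a * w) (-(starRingEnd ℂ) a) z := by
    simpa using ((hasDerivAt_id z).const_mul ((starRingEnd ℂ) a)).const_sub 1
  have := h1.div h2 h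
  refine this.congr_deriv ?_
  have : ((starRingEnd ℂ) a) * a = (Complex.normSq a : ℂ) := by
    rw [mul_comm, Complex.mul_conj]
  rw [div_left_inj' (pow_ne_zero 2 h)]
  linear_combination (-1:ℂ) * this

lemma myContE : Continuous (fun t : ℝ => Complex.exp (↑t * Complex.I)) :=
  (Complex.continuous_ofReal.mul continuous_const).cexp

lemma myHasDerivE (t : ℝ) :
    HasDerivAt (fun s : ℝ => Complex.exp (↑s * Complex.I))
      (Complex.exp (↑t * Complex.I) * Complex.I) t := by
  have h1 : circleMap 0 1 = fun s : ℝ => Complex.exp (↑s * Complex.I) := by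
    funext s; simp [circleMap]
  have := hasDerivAt_circleMap 0 1 t
  rw [h1] at this
  simpa [circleMap] using this

lemma myPoisson {w : ℂ} (hw : ‖w‖ < 1) :
    (∫ t in (0:ℝ)..(2*π), (Complex.normSq (1 - w * Complex.exp (↑t * Complex.I)))⁻¹)
      = 2*π / (1 - Complex.normSq w) := by
  set E : ℝ → ℂ := fun t => Complex.exp (↑t * Complex.I) with hEdef
  have hE : ∀ t, ‖E t‖ = 1 := myNormExp
  have hd1 : ∀ t, 1 - w * E t ≠ 0 := by
    intro t h
    have h1 : (1:ℂ) = w * E t := by linear_combination h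
    have : (1:ℝ) = ‖w * E t‖ := by rw [← h1]; simp
    rw [norm_mul, hE t, mul_one] at this
    linarith
  have hd2 : ∀ t, E t - (starRingEnd ℂ) w ≠ 0 := by
    intro t h
    have h1 : E t = (starRingEnd ℂ) w := sub_eq_zero.mp h
    have : (1:ℝ) = ‖(starRingEnd ℂ) w‖ := by rw [← h1, hE]
    rw [RCLike.norm_conj] at this
    linarith
  have hnsq : Complex.normSq w < 1 := myNormSqLtOne hw
  have hc0 : (1:ℂ) - (Complex.normSq w : ℝ) ≠ 0 := by
    intro h
    have : ((1 - Complex.normSq w : ℝ) : ℂ) = 0 := by push_cast; linear_combination h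
    have := Complex.ofReal_eq_zero.mp this
    linarith
  have hEne : ∀ t, E t ≠ 0 := fun t => Complex.exp_ne_zero _
  -- pointwise identity: real integrand coerced = E * ((1-wE)(E-conj w))⁻¹
  have key : ∀ t : ℝ, ((Complex.normSq (1 - w * E t) : ℝ) : ℂ)⁻¹
      = E t * ((1 - w * E t) * (E t - (starRingEnd ℂ) w))⁻¹ := by
    intro t
    have hconjE : (starRingEnd ℂ) (E t) = (E t)⁻¹ := by
      rw [hEdef]
      simp only [← Complex.exp_conj, map_mul, Complex.conj_ofReal, Complex.conj_I]
      rw [← Complex.exp_neg]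
      ring_nf
    have hmc : ((Complex.normSq (1 - w * E t) : ℝ) : ℂ)
        = (1 - w * E t) * ((1:ℂ) - (starRingEnd ℂ) w * (E t)⁻¹) := by
      rw [← Complex.mul_conj]
      simp only [map_sub, map_one, map_mul, hconjE]
    have harg : (1 - w * E t) * ((1:ℂ) - (starRingEnd ℂ) w * (E t)⁻¹)
        = ((1 - w * E t) * (E t - (starRingEnd ℂ) w)) * (E t)⁻¹ := by
      have hEinv : E t * (E t)⁻¹ = 1 := mul_inv_cancel₀ (hEne t)
      field_simp
      linear_combination (w * E t - 1) * hEinv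
    rw [hmc, harg, mul_inv, inv_inv, mul_comm]
  -- partial fractions
  have pf : ∀ t : ℝ, E t * ((1 - w * E t) * (E t - (starRingEnd ℂ) w))⁻¹
      = ((1:ℂ) - (Complex.normSq w : ℝ))⁻¹ *
        (E t * (E t - (starRingEnd ℂ) w)⁻¹ + w * (E t * (1 - w * E t)⁻¹)) := by
    intro t
    have h1 := hd1 t
    have h2 := hd2 t
    have hmul : w * (starRingEnd ℂ) w = (Complex.normSq w : ℝ) := Complex.mul_conj w
    have h1' : 1 - E t * w ≠ 0 := by rwa [mul_comm] at h1
    have hc1 : 1 - w * (starRingEnd ℂ) w ≠ 0 := by rwa [hmul]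
    rw [← hmul]
    field_simp
    ring
  -- the two integrals
  have hint1 : (∫ t in (0:ℝ)..(2*π), E t * Complex.I * (E t - (starRingEnd ℂ) w)⁻¹)
      = 2 * π * Complex.I := by
    have hmem : (starRingEnd ℂ) w ∈ ball (0:ℂ) 1 := by
      simp [RCLike.norm_conj]; exact hw
    have := circleIntegral.integral_sub_inv_of_mem_ball hmem
    simp only [circleIntegral, deriv_circleMap, circleMap, Complex.ofReal_one, one_mul,
      zero_add, smul_eq_mul] at this
    exact this
  have hint2 : w * (∫ t in (0:ℝ)..(2*π), E t * Complex.I * (1 - w * E t)⁻¹) = 0 := by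
    rcases eq_or_ne w 0 with rfl | hw0
    · simp
    · have hftc : ∀ t ∈ uIcc (0:ℝ) (2*π),
          HasDerivAt (fun s => -w⁻¹ * Complex.log (1 - w * E s))
            (E t * Complex.I * (1 - w * E t)⁻¹) t := by
        intro t _
        have hde : HasDerivAt (fun s : ℝ => 1 - w * E s) (-(w * (E t * Complex.I))) t := by
          simpa using ((myHasDerivE t).const_mul w).const_sub 1
        have hslit : (1 - w * E t) ∈ Complex.slitPlane := by
          rw [Complex.mem_slitPlane_iff]
          left
          have h1 : (w * E t).re ≤ ‖w * E t‖ := Complex.re_le_norm _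
          rw [norm_mul, hE t, mul_one] at h1
          simp only [Complex.sub_re, Complex.one_re]
          linarith
        have hlog := (hde.clog_real hslit).const_mul (-w⁻¹)
        refine hlog.congr_deriv ?_
        simp only [neg_mul, neg_div, mul_neg, neg_neg]
        rw [div_eq_mul_inv, ← mul_assoc, ← mul_assoc, inv_mul_cancel₀ hw0, one_mul]
      have hcont : IntervalIntegrable (fun t => E t * Complex.I * (1 - w * E t)⁻¹)
          volume 0 (2*π) := by
        apply Continuous.intervalIntegrable
        exact (myContE.mul continuous_const).mul
          ((continuous_const.sub (continuous_const.mul myContE)).inv₀ hd1)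
      rw [intervalIntegral.integral_eq_sub_of_hasDerivAt hftc hcont]
      have hE2 : E (2*π) = 1 := by
        rw [hEdef]
        simp only []
        rw [show ((2*π : ℝ) : ℂ) = 2 * π by push_cast; ring, Complex.exp_two_pi_mul_I]
      have hE0 : E 0 = 1 := by
        rw [hEdef]; simp
      rw [hE2, hE0]
      ring
  -- integrability of pieces
  have hcF1 : Continuous (fun t => E t * (E t - (starRingEnd ℂ) w)⁻¹) :=
    myContE.mul ((myContE.sub continuous_const).inv₀ hd2)
  have hcF2 : Continuous (fun t => E t * (1 - w * E t)⁻¹) :=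
    myContE.mul ((continuous_const.sub (continuous_const.mul myContE)).inv₀ hd1)
  -- assemble
  have step1 : ((∫ t in (0:ℝ)..(2*π), (Complex.normSq (1 - w * E t))⁻¹ : ℝ) : ℂ)
      = ∫ t in (0:ℝ)..(2*π), E t * ((1 - w * E t) * (E t - (starRingEnd ℂ) w))⁻¹ := by
    rw [← intervalIntegral.integral_ofReal]
    apply intervalIntegral.integral_congr
    intro t _
    push_cast
    exact key t
  rw [intervalIntegral.integral_congr (g := fun t => ((1:ℂ) - (Complex.normSq w : ℝ))⁻¹ *
        (E t * (E t - (starRingEnd ℂ) w)⁻¹ + w * (E t * (1 - w * E t)⁻¹)))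
      (fun t _ => pf t)] at step1
  rw [intervalIntegral.integral_const_mul, intervalIntegral.integral_add (g := fun t => w * (E t * (1 - w * E t)⁻¹))
      (hcF1.intervalIntegrable _ _) ((continuous_const.mul hcF2).intervalIntegrable _ _),
      intervalIntegral.integral_const_mul] at step1
  have e1 : (∫ t in (0:ℝ)..(2*π), E t * (E t - (starRingEnd ℂ) w)⁻¹) = 2 * π := by
    have : (∫ t in (0:ℝ)..(2*π), E t * (E t - (starRingEnd ℂ) w)⁻¹)
        = -Complex.I * ∫ t in (0:ℝ)..(2*π), E t * Complex.I * (E t - (starRingEnd ℂ) w)⁻¹ := by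
      rw [← intervalIntegral.integral_const_mul]
      apply intervalIntegral.integral_congr
      intro t _
      linear_combination (E t * (E t - (starRingEnd ℂ) w)⁻¹) * Complex.I_sq
    rw [this, hint1]
    linear_combination (-2*(π:ℂ)) * Complex.I_sq
  have e2 : w * (∫ t in (0:ℝ)..(2*π), E t * (1 - w * E t)⁻¹) = 0 := by
    rcases eq_or_ne w 0 with rfl | hw0
    · simp
    have : (∫ t in (0:ℝ)..(2*π), E t * (1 - w * E t)⁻¹)
        = -Complex.I * ∫ t in (0:ℝ)..(2*π), E t * Complex.I * (1 - w * E t)⁻¹ := by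
      rw [← intervalIntegral.integral_const_mul]
      apply intervalIntegral.integral_congr
      intro t _
      linear_combination (E t * (1 - w * E t)⁻¹) * Complex.I_sq
    rw [this]
    linear_combination (-Complex.I) * hint2
  rw [e1, e2] at step1
  have : ((∫ t in (0:ℝ)..(2*π), (Complex.normSq (1 - w * E t))⁻¹ : ℝ) : ℂ)
      = ((2*π / (1 - Complex.normSq w) : ℝ) : ℂ) := by
    rw [step1]
    push_cast
    field_simp
    ring
  exact_mod_cast this


theorem stmt12 (n : ℕ) (B : ℂ → ℂ) (hB : IsBlaschke n B) (q : ℝ) (hq : 1 ≤ q) :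
    ∀ r ∈ Ioo (0:ℝ) 1,
      ∫ t in (0:ℝ)..(2*π), ‖deriv B ((r : ℂ) * Complex.exp (t * Complex.I))‖ ^ q ≤
        2*π*n / (1 - r^2) ^ (q-1) := by
  obtain ⟨c, a, hc, ha, hBf⟩ := hB
  rintro r ⟨hr0, hr1⟩
  have hπ := Real.pi_pos
  have hr2 : 0 < 1 - r^2 := by nlinarith
  have hq0 : (0:ℝ) ≤ q - 1 := by linarith
  set E : ℝ → ℂ := fun t => Complex.exp (↑t * Complex.I) with hEdef
  set z : ℝ → ℂ := fun t => (r:ℂ) * E t with hzdef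
  have hznorm : ∀ t, ‖z t‖ = r := by
    intro t
    rw [hzdef]
    simp only []
    rw [norm_mul, myNormExp, mul_one, Complex.norm_real, Real.norm_of_nonneg hr0.le]
  have hzlt : ∀ t, ‖z t‖ < 1 := fun t => by rw [hznorm]; exact hr1
  have hzc : Continuous z :=
    continuous_const.mul ((Complex.continuous_ofReal.mul continuous_const).cexp)
  set F : ℂ → ℂ := fun w => c * ∑ k,
      (1 - (Complex.normSq (a k) : ℂ)) / (1 - (starRingEnd ℂ) (a k) * w)^2 *
      ∏ j ∈ Finset.univ.erase k, (w - a j) / (1 - (starRingEnd ℂ) (a j) * w) with hFdef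
  have hder : ∀ t : ℝ, deriv B (z t) = F (z t) := by
    intro t
    have hw := hzlt t
    have hprod : HasDerivAt (fun w => ∏ k, (w - a k) / (1 - (starRingEnd ℂ) (a k) * w))
        (∑ k, (∏ j ∈ Finset.univ.erase k, (z t - a j) / (1 - (starRingEnd ℂ) (a j) * (z t))) •
          ((1 - (Complex.normSq (a k) : ℂ)) / (1 - (starRingEnd ℂ) (a k) * (z t))^2)) (z t) :=
      HasDerivAt.fun_finsetProd (fun k _ => myFactorDeriv (myDenomNe (ha k) hw.le))
    have hBd : HasDerivAt B (F (z t)) (z t) := by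
      have hBfun : B = fun w => c * ∏ k, (w - a k) / (1 - (starRingEnd ℂ) (a k) * w) :=
        funext hBf
      rw [hBfun, hFdef]
      have h2 := hprod.const_mul c
      refine h2.congr_deriv ?_
      simp only [smul_eq_mul]
      rw [Finset.mul_sum, Finset.mul_sum]
      exact Finset.sum_congr rfl fun k _ => by ring
    exact hBd.deriv
  have hFc : Continuous fun t => F (z t) := by
    rw [hFdef]
    apply continuous_const.mul
    apply continuous_finset_sum
    intro k _
    apply Continuous.mul
    · apply Continuous.div continuous_const
      · exact (continuous_const.sub (continuous_const.mul hzc)).pow 2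
      · intro t; exact pow_ne_zero 2 (myDenomNe (ha k) (hzlt t).le)
    · apply continuous_finset_prod
      intro j _
      exact Continuous.div (hzc.sub continuous_const)
        (continuous_const.sub (continuous_const.mul hzc))
        (fun t => myDenomNe (ha j) (hzlt t).le)
  set g : Fin n → ℝ → ℝ := fun k t => (1 - Complex.normSq (a k)) *
    (Complex.normSq (1 - ((starRingEnd ℂ) (a k) * (r:ℂ)) * E t))⁻¹ with hgdef
  have harg : ∀ (k : Fin n) (t : ℝ),
      (1 : ℂ) - ((starRingEnd ℂ) (a k) * (r:ℂ)) * E t = 1 - (starRingEnd ℂ) (a k) * z t := by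
    intro k t; rw [hzdef]; ring
  have hgrw : ∀ (k : Fin n) (t : ℝ),
      (1 - Complex.normSq (a k)) / Complex.normSq (1 - (starRingEnd ℂ) (a k) * z t) = g k t := by
    intro k t
    rw [hgdef]
    simp only []
    rw [harg k t, div_eq_mul_inv]
  have hgc : ∀ k, Continuous (g k) := by
    intro k
    apply continuous_const.mul
    apply Continuous.inv₀
    · exact Complex.continuous_normSq.comp
        (continuous_const.sub (continuous_const.mul
          ((Complex.continuous_ofReal.mul continuous_const).cexp)))
    · intro t
      refine (Complex.normSq_pos.2 ?_).ne'
      rw [harg k t]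
      exact myDenomNe (ha k) (hzlt t).le
  have hgint : ∀ k, (∫ t in (0:ℝ)..(2*π), g k t) ≤ 2*π := by
    intro k
    have hwk : ‖(starRingEnd ℂ) (a k) * (r:ℂ)‖ < 1 := by
      rw [norm_mul, RCLike.norm_conj, Complex.norm_real, Real.norm_of_nonneg hr0.le]
      nlinarith [norm_nonneg (a k), ha k]
    have hp := myPoisson hwk
    rw [hgdef]
    simp only []
    rw [intervalIntegral.integral_const_mul, hp]
    have hnsqk : Complex.normSq ((starRingEnd ℂ) (a k) * (r:ℂ))
        = Complex.normSq (a k) * r^2 := by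
      rw [map_mul, Complex.normSq_conj, Complex.normSq_ofReal]; ring
    rw [hnsqk]
    have hs0 : 0 ≤ Complex.normSq (a k) := Complex.normSq_nonneg _
    have hs1 : Complex.normSq (a k) < 1 := myNormSqLtOne (ha k)
    have hdpos : 0 < 1 - Complex.normSq (a k) * r^2 := by nlinarith
    have hrw2 : (1 - Complex.normSq (a k)) * (2*π/(1 - Complex.normSq (a k) * r^2))
        = 2*π * ((1 - Complex.normSq (a k))/(1 - Complex.normSq (a k) * r^2)) := by ring
    rw [hrw2]
    have hle : (1 - Complex.normSq (a k))/(1 - Complex.normSq (a k) * r^2) ≤ 1 := by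
      rw [div_le_one hdpos]; nlinarith
    nlinarith
  have hpt : ∀ t ∈ Icc (0:ℝ) (2*π),
      ‖F (z t)‖ ^ q ≤ ((1-r^2)⁻¹)^(q-1) * ∑ k, g k t := by
    intro t _
    have hX0 : (0:ℝ) ≤ ‖F (z t)‖ := norm_nonneg _
    have hX1 : ‖F (z t)‖ ≤ (1-r^2)⁻¹ := by
      rw [hFdef]
      have := myBound2 c a hc ha (hzlt t)
      rwa [hznorm t] at this
    have hX2 : ‖F (z t)‖ ≤ ∑ k, g k t := by
      rw [hFdef]
      refine (myBound1 c a hc ha (hzlt t)).trans (le_of_eq ?_)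
      exact Finset.sum_congr rfl fun k _ => hgrw k t
    have hqne : (q-1) + 1 ≠ 0 := by intro h; linarith
    have h1 : ‖F (z t)‖ ^ q = ‖F (z t)‖ ^ (q-1) * ‖F (z t)‖ ^ (1:ℝ) := by
      rw [← Real.rpow_add' hX0 hqne]
      norm_num
    rw [h1, Real.rpow_one]
    apply mul_le_mul (Real.rpow_le_rpow hX0 hX1 hq0) hX2 hX0
      (Real.rpow_nonneg (by positivity) _)
  have hci : Continuous fun t => ‖F (z t)‖ ^ q :=
    hFc.norm.rpow_const (fun t => Or.inr (by linarith))
  have hcg2 : Continuous fun t => ((1-r^2)⁻¹)^(q-1) * ∑ k, g k t :=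
    continuous_const.mul (continuous_finset_sum _ fun k _ => hgc k)
  calc ∫ t in (0:ℝ)..(2*π), ‖deriv B (z t)‖ ^ q
      = ∫ t in (0:ℝ)..(2*π), ‖F (z t)‖ ^ q := by
        apply intervalIntegral.integral_congr
        intro t _
        show ‖deriv B (z t)‖ ^ q = ‖F (z t)‖ ^ q
        rw [hder t]
    _ ≤ ∫ t in (0:ℝ)..(2*π), ((1-r^2)⁻¹)^(q-1) * ∑ k, g k t :=
        intervalIntegral.integral_mono_on (by positivity)
          (hci.intervalIntegrable _ _) (hcg2.intervalIntegrable _ _) hpt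
    _ = ((1-r^2)⁻¹)^(q-1) * ∑ k, ∫ t in (0:ℝ)..(2*π), g k t := by
        rw [intervalIntegral.integral_const_mul,
          intervalIntegral.integral_finset_sum (fun k _ => (hgc k).intervalIntegrable _ _)]
    _ ≤ ((1-r^2)⁻¹)^(q-1) * (n * (2*π)) := by
        apply mul_le_mul_of_nonneg_left _ (Real.rpow_nonneg (by positivity) _)
        calc (∑ k, ∫ t in (0:ℝ)..(2*π), g k t) ≤ ∑ _k : Fin n, 2*π :=
              Finset.sum_le_sum fun k _ => hgint k
          _ = n * (2*π) := by
              rw [Finset.sum_const, Finset.card_univ, Fintype.card_fin, nsmul_eq_mul]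
    _ = 2*π*n / (1 - r^2) ^ (q-1) := by
        rw [Real.inv_rpow hr2.le, div_eq_mul_inv]
        ring
end

section
/- If f(z) = Σ_{k≥1} a_k z^{2^k} is analytic on the unit disk and ∫_𝔻 |f(z)| dA(z) < ∞, then Σ_{k≥1} 2^{-k} |a_k| < ∞. -/
open Complex Metric MeasureTheory Real Set
open scoped Classical NNReal ENNReal

set_option maxHeartbeats 1000000

lemma absSummable (a : ℕ → ℂ) (f : ℂ → ℂ)
    (hf : ∀ z ∈ ball (0:ℂ) 1, HasSum (fun k : ℕ => a (k+1) * z ^ (2^(k+1))) (f z))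
    {r : ℝ} (hr0 : 0 ≤ r) (hr1 : r < 1) :
    Summable fun k : ℕ => ‖a (k+1)‖ * r ^ (2^(k+1)) := by
  set r' : ℝ := (r + 1) / 2 with hr'
  have hrr' : r < r' := by simp only [hr']; linarith
  have hr'0 : 0 < r' := by simp only [hr']; linarith
  have hr'1 : r' < 1 := by simp only [hr']; linarith
  have hz : ((r' : ℂ)) ∈ ball (0:ℂ) 1 := by
    simp [Complex.norm_real, abs_of_pos hr'0, hr'1]
  have hs := (hf _ hz).summable
  have htend : Filter.Tendsto (fun k : ℕ => ‖a (k+1)‖ * r' ^ (2^(k+1))) Filter.atTop (nhds 0) := by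
    have := hs.tendsto_atTop_zero.norm
    simpa [norm_mul, norm_pow, map_pow, Complex.norm_real, Real.norm_eq_abs,
      abs_of_pos hr'0] using this
  obtain ⟨C, hC⟩ := htend.bddAbove_range
  simp only [mem_upperBounds, forall_mem_range] at hC
  have hC0 : 0 ≤ C := le_trans (by positivity) (hC 0)
  set ρ : ℝ := r / r' with hρ
  have hρ0 : 0 ≤ ρ := div_nonneg hr0 hr'0.le
  have hρ1 : ρ < 1 := (div_lt_one hr'0).2 hrr'
  have hgeo : Summable (fun k : ℕ => C * ρ ^ (k+1)) := by
    have := (summable_geometric_of_lt_one hρ0 hρ1).mul_left (C * ρ)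
    refine this.congr fun k => ?_
    ring
  refine Summable.of_nonneg_of_le (fun k => by positivity) (fun k => ?_) hgeo
  have h1 : ‖a (k+1)‖ * r ^ (2^(k+1)) = (‖a (k+1)‖ * r' ^ (2^(k+1))) * ρ ^ (2^(k+1)) := by
    have hρr : ρ * r' = r := div_mul_cancel₀ r hr'0.ne'
    rw [← hρr, mul_pow]
    ring
  rw [h1]
  have h2 : ρ ^ (2^(k+1)) ≤ ρ ^ (k+1) :=
    pow_le_pow_of_le_one hρ0 hρ1.le (Nat.lt_two_pow_self (n := k+1)).le
  calc (‖a (k+1)‖ * r' ^ (2^(k+1))) * ρ ^ (2^(k+1)) ≤ C * ρ ^ (2^(k+1)) :=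
        mul_le_mul_of_nonneg_right (hC k) (by positivity)
    _ ≤ C * ρ ^ (k+1) := mul_le_mul_of_nonneg_left h2 hC0

lemma contOn (a : ℕ → ℂ) (f : ℂ → ℂ)
    (hf : ∀ z ∈ ball (0:ℂ) 1, HasSum (fun k : ℕ => a (k+1) * z ^ (2^(k+1))) (f z)) :
    ContinuousOn f (ball (0:ℂ) 1) := by
  set g : ℂ → ℂ := fun z => ∑' k : ℕ, a (k+1) * z ^ (2^(k+1)) with hg
  have hfg : EqOn f g (ball (0:ℂ) 1) := fun z hz => ((hf z hz).tsum_eq).symm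
  refine ContinuousOn.congr ?_ hfg
  intro z hz
  simp only [mem_ball, dist_zero_right] at hz
  set r : ℝ := (‖z‖ + 1) / 2 with hr
  have h0r : 0 ≤ r := by positivity
  have hzr : ‖z‖ < r := by simp only [hr]; linarith
  have hr1 : r < 1 := by simp only [hr]; linarith
  have hcont : ContinuousOn g (closedBall (0:ℂ) r) := by
    refine continuousOn_tsum (fun k => (continuous_const.mul (continuous_pow _)).continuousOn)
      (absSummable a f hf h0r hr1) (fun k x hx => ?_)
    simp only [mem_closedBall, dist_zero_right] at hx
    rw [norm_mul, norm_pow]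
    exact mul_le_mul_of_nonneg_left (pow_le_pow_left₀ (norm_nonneg _) hx _) (norm_nonneg _)
  have hnhds : closedBall (0:ℂ) r ∈ nhds z := by
    refine Filter.mem_of_superset (Metric.isOpen_ball.mem_nhds ?_) ball_subset_closedBall
    simpa [mem_ball, dist_zero_right] using hzr
  exact (hcont.continuousAt hnhds).continuousWithinAt

lemma coeffBound (a : ℕ → ℂ) (f : ℂ → ℂ)
    (hf : ∀ z ∈ ball (0:ℂ) 1, HasSum (fun k : ℕ => a (k+1) * z ^ (2^(k+1))) (f z))
    {r : ℝ} (hr0 : 0 < r) (hr1 : r < 1) (k : ℕ) :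
    2 * π * (‖a (k+1)‖ * r ^ (2^(k+1))) ≤
      ∫ t in Ioc (-π) π, ‖f ((r:ℂ) * Complex.exp ((t:ℂ) * I))‖ := by
  set N : ℕ → ℕ := fun m => 2^(m+1) with hN
  set d : ℕ → ℝ := fun m => (N m : ℝ) - (N k : ℝ) with hd
  set F : ℕ → ℝ → ℂ := fun m t =>
    a (m+1) * (r:ℂ)^(N m) * Complex.exp ((((d m) * t : ℝ) : ℂ) * I) with hF
  have hmem : ∀ t : ℝ, ((r:ℂ) * Complex.exp ((t:ℂ) * I)) ∈ ball (0:ℂ) 1 := by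
    intro t
    simp only [mem_ball, dist_zero_right, norm_mul, Complex.norm_real, Real.norm_eq_abs,
      Complex.norm_exp_ofReal_mul_I, mul_one, abs_of_pos hr0]
    exact hr1
  -- pointwise expansion
  have hpt : ∀ t : ℝ, f ((r:ℂ) * Complex.exp ((t:ℂ) * I)) *
      Complex.exp ((((-(N k : ℝ)) * t : ℝ) : ℂ) * I) = ∑' m, F m t := by
    intro t
    rw [← (hf _ (hmem t)).tsum_eq, ← tsum_mul_right]
    congr 1
    ext m
    rw [hF]
    simp only
    rw [mul_pow, ← Complex.exp_nat_mul]
    have he : (((d m * t : ℝ)) : ℂ) * I = (N m : ℂ) * ((t:ℂ) * I) + (((-(N k : ℝ)) * t : ℝ) : ℂ) * I := by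
      push_cast [hd]
      ring
    rw [he, Complex.exp_add]
    ring
  -- integrability side conditions
  have hsum : Summable fun m : ℕ => ‖a (m+1)‖ * r ^ (N m) := absSummable a f hf hr0.le hr1
  have hFnorm : ∀ m t, ‖F m t‖ = ‖a (m+1)‖ * r ^ (N m) := by
    intro m t
    rw [hF]
    simp only [norm_mul, norm_pow, Complex.norm_real, Real.norm_eq_abs, abs_of_pos hr0,
      ← Complex.ofReal_mul, Complex.norm_exp_ofReal_mul_I, mul_one]
  have hmeas : ∀ m : ℕ, AEStronglyMeasurable (F m) (volume.restrict (Ioc (-π) π)) := by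
    intro m
    apply Continuous.aestronglyMeasurable
    fun_prop
  have hlint : ∑' m : ℕ, ∫⁻ t in Ioc (-π) π, (‖F m t‖₊ : ℝ≥0∞) ≠ ⊤ := by
    have h1 : ∀ m : ℕ, ∫⁻ t in Ioc (-π) π, (‖F m t‖₊ : ℝ≥0∞)
        = ENNReal.ofReal (‖a (m+1)‖ * r ^ (N m)) * ENNReal.ofReal (2*π) := by
      intro m
      have : ∀ t : ℝ, (‖F m t‖₊ : ℝ≥0∞) = ENNReal.ofReal (‖a (m+1)‖ * r ^ (N m)) := by
        intro t
        rw [← hFnorm m t, ENNReal.ofReal_eq_coe_nnreal (norm_nonneg _)]; rfl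
      rw [lintegral_congr this, lintegral_const, Measure.restrict_apply_univ, Real.volume_Ioc]
      congr 1
      ring_nf
    rw [tsum_congr h1, ENNReal.tsum_mul_right]
    apply ENNReal.mul_ne_top _ ENNReal.ofReal_ne_top
    rw [← ENNReal.ofReal_tsum_of_nonneg (fun m => by positivity) hsum]
    exact ENNReal.ofReal_ne_top
  -- swap integral and sum
  have hswap : ∫ t in Ioc (-π) π, (∑' m, F m t) = ∑' m, ∫ t in Ioc (-π) π, F m t :=
    integral_tsum hmeas hlint
  have hNinj : Function.Injective N := fun m l h => by
    simpa [hN] using Nat.pow_right_injective (le_refl 2) h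
  have hval : ∀ m : ℕ, m ≠ k → ∫ t in Ioc (-π) π, F m t = 0 := by
    intro m hm
    set n : ℤ := (N m : ℤ) - (N k : ℤ) with hn
    have hdm : d m = (n : ℝ) := by push_cast [hd, hn]; ring
    have hn0 : n ≠ 0 := by
      intro h
      apply hm
      apply hNinj
      have := sub_eq_zero.1 h
      exact_mod_cast this
    have hc0 : ((d m : ℂ)) * I ≠ 0 := by
      apply mul_ne_zero _ I_ne_zero
      rw [hdm]
      exact_mod_cast (Int.cast_ne_zero (α := ℂ)).2 hn0
    have h1 : ∫ t in Ioc (-π) π, F m t = ∫ t in (-π)..π, F m t := by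
      rw [intervalIntegral.integral_of_le (by linarith [Real.pi_pos])]
    rw [h1, hF]
    simp only
    have h2 : ∀ t : ℝ, a (m+1) * (r:ℂ)^(N m) * Complex.exp ((((d m) * t : ℝ) : ℂ) * I)
        = a (m+1) * (r:ℂ)^(N m) * Complex.exp (((d m : ℂ) * I) * (t:ℂ)) := by
      intro t
      congr 2
      push_cast
      ring
    rw [intervalIntegral.integral_congr (fun t _ => h2 t)]
    rw [intervalIntegral.integral_const_mul, integral_exp_mul_complex hc0]
    have h3 : Complex.exp ((d m : ℂ) * I * (π:ℂ)) = Complex.exp ((d m : ℂ) * I * ((-π : ℝ):ℂ)) := by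
      have h4 : (d m : ℂ) * I * (π:ℂ) = (d m : ℂ) * I * ((-π : ℝ):ℂ) + (n:ℂ) * (2 * (π:ℂ) * I) := by
        rw [hdm]
        push_cast
        ring
      rw [h4, Complex.exp_add, Complex.exp_int_mul_two_pi_mul_I, mul_one]
    rw [h3, sub_self, zero_div, mul_zero]
  have hvalk : ∫ t in Ioc (-π) π, F k t = a (k+1) * (r:ℂ)^(N k) * (2*π) := by
    have hdk : d k = 0 := by simp [hd]
    have : ∀ t : ℝ, F k t = a (k+1) * (r:ℂ)^(N k) := by
      intro t
      rw [hF]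
      simp [hdk]
    rw [setIntegral_congr_fun measurableSet_Ioc (fun t _ => this t), setIntegral_const,
      Real.volume_real_Ioc]
    have : π - -π = 2 * π := by ring
    rw [this, max_eq_left (by positivity), Complex.real_smul]
    push_cast
    ring
  have htsum : (∑' m, ∫ t in Ioc (-π) π, F m t) = a (k+1) * (r:ℂ)^(N k) * (2*π) := by
    rw [tsum_eq_single k (fun m hm => hval m hm)]
    exact hvalk
  have hkey : ∫ t in Ioc (-π) π, (f ((r:ℂ) * Complex.exp ((t:ℂ) * I)) *
      Complex.exp ((((-(N k : ℝ)) * t : ℝ) : ℂ) * I)) = a (k+1) * (r:ℂ)^(N k) * (2*π) := by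
    rw [integral_congr_ae (Filter.Eventually.of_forall (fun t => hpt t)), hswap, htsum]
  have hnorm : ‖a (k+1) * (r:ℂ)^(N k) * (2*π : ℂ)‖ = 2 * π * (‖a (k+1)‖ * r ^ (N k)) := by
    simp only [norm_mul, norm_pow, Complex.norm_real, Real.norm_eq_abs, abs_of_pos hr0]
    rw [show ‖(2:ℂ)‖ = 2 by simp, abs_of_pos Real.pi_pos]
    ring
  calc 2 * π * (‖a (k+1)‖ * r ^ (2^(k+1)))
      = ‖a (k+1) * (r:ℂ)^(N k) * (2*π : ℂ)‖ := (hnorm).symm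
    _ = ‖∫ t in Ioc (-π) π, (f ((r:ℂ) * Complex.exp ((t:ℂ) * I)) *
          Complex.exp ((((-(N k : ℝ)) * t : ℝ) : ℂ) * I))‖ := by rw [hkey]
    _ ≤ ∫ t in Ioc (-π) π, ‖f ((r:ℂ) * Complex.exp ((t:ℂ) * I)) *
          Complex.exp ((((-(N k : ℝ)) * t : ℝ) : ℂ) * I)‖ := norm_integral_le_integral_norm _
    _ = ∫ t in Ioc (-π) π, ‖f ((r:ℂ) * Complex.exp ((t:ℂ) * I))‖ := by
        refine integral_congr_ae (Filter.Eventually.of_forall (fun t => ?_))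
        simp [Complex.norm_exp]

lemma polarBound (g : ℂ → ℝ≥0∞) :
    ∫⁻ p in (Ioo (0:ℝ) 1) ×ˢ (Ioo (-π) π),
      ENNReal.ofReal p.1 * g ((p.1:ℂ) * Complex.exp ((p.2:ℂ) * I)) ≤
    ∫⁻ z in ball (0:ℂ) 1, g z := by
  set s : Set (ℝ × ℝ) := (Ioo (0:ℝ) 1) ×ˢ (Ioo (-π) π) with hs_def
  have hs : MeasurableSet s := measurableSet_Ioo.prod measurableSet_Ioo
  set B : ℝ × ℝ → ℝ × ℝ →L[ℝ] ℝ × ℝ := fun p =>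
    LinearMap.toContinuousLinearMap (Matrix.toLin (Module.Basis.finTwoProd ℝ) (Module.Basis.finTwoProd ℝ)
      !![Real.cos p.2, -p.1 * Real.sin p.2; Real.sin p.2, p.1 * Real.cos p.2]) with hB
  have hder : ∀ p ∈ s, HasFDerivWithinAt polarCoord.symm (B p) s p := fun p _ =>
    (hasFDerivAt_polarCoord_symm p).hasFDerivWithinAt
  have B_det : ∀ p, (B p).det = p.1 := by
    intro p
    conv_rhs => rw [← one_mul p.1, ← Real.cos_sq_add_sin_sq p.2]
    simp only [hB, neg_mul, LinearMap.det_toContinuousLinearMap, LinearMap.det_toLin,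
      Matrix.det_fin_two_of, sub_neg_eq_add]
    ring
  have hsub : s ⊆ polarCoord.target := by
    rintro ⟨p1, p2⟩ ⟨h1, h2⟩
    exact ⟨h1.1, h2⟩
  have hinj : InjOn polarCoord.symm s := by
    have := polarCoord.symm.injOn
    rw [OpenPartialHomeomorph.symm_source] at this
    exact this.mono hsub
  set E := Complex.measurableEquivRealProd with hE
  set G : ℝ × ℝ → ℝ≥0∞ := fun q => g (E.symm q) with hG
  have hkey : ∀ p ∈ s, ENNReal.ofReal p.1 * g ((p.1:ℂ) * Complex.exp ((p.2:ℂ) * I))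
      = ENNReal.ofReal |(B p).det| * G (polarCoord.symm p) := by
    rintro ⟨p1, p2⟩ ⟨h1, _⟩
    rw [B_det, abs_of_pos h1.1]
    congr 1
    rw [hG]
    congr 1
    simp only [polarCoord, OpenPartialHomeomorph.mk_coe_symm, PartialEquiv.coe_symm_mk,
      Complex.measurableEquivRealProd_symm_apply]
    rw [Complex.exp_mul_I, ← Complex.ofReal_cos, ← Complex.ofReal_sin]
    apply Complex.ext <;> simp [hE, Complex.cos_ofReal_re, Complex.sin_ofReal_re]
  calc ∫⁻ p in s, ENNReal.ofReal p.1 * g ((p.1:ℂ) * Complex.exp ((p.2:ℂ) * I))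
      = ∫⁻ p in s, ENNReal.ofReal |(B p).det| * G (polarCoord.symm p) :=
        setLIntegral_congr_fun hs hkey
    _ = ∫⁻ q in polarCoord.symm '' s, G q :=
        (lintegral_image_eq_lintegral_abs_det_fderiv_mul volume hs hder hinj G).symm
    _ = ∫⁻ z in E.symm '' (polarCoord.symm '' s), g z :=
        (Complex.volume_preserving_equiv_real_prod.symm E).setLIntegral_comp_emb
          E.symm.measurableEmbedding g _
    _ ≤ ∫⁻ z in ball (0:ℂ) 1, g z := by
        apply lintegral_mono_set
        rintro z ⟨q, ⟨p, hp, rfl⟩, rfl⟩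
        obtain ⟨h1, h2⟩ := hp
        simp only [hE, polarCoord, OpenPartialHomeomorph.mk_coe_symm, PartialEquiv.coe_symm_mk,
          Complex.measurableEquivRealProd_symm_apply]
        simp only [mem_ball, dist_zero_right]
        have : ‖({ re := p.1 * Real.cos p.2, im := p.1 * Real.sin p.2 } : ℂ)‖ = p.1 := by
          rw [Complex.norm_def, Complex.normSq_mk]
          have : p.1 * Real.cos p.2 * (p.1 * Real.cos p.2) + p.1 * Real.sin p.2 * (p.1 * Real.sin p.2)
              = p.1^2 * ((Real.cos p.2)^2 + (Real.sin p.2)^2) := by ring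
          rw [this, Real.cos_sq_add_sin_sq, mul_one, Real.sqrt_sq h1.1.le]
        rw [this]
        exact h1.2

theorem stmt14 (f : ℂ → ℂ) (a : ℕ → ℂ)
    (hf : ∀ z ∈ ball (0:ℂ) 1, HasSum (fun k : ℕ => a (k+1) * z ^ (2^(k+1))) (f z))
    (hint : ∫⁻ z in ball (0:ℂ) 1, (‖f z‖₊ : ℝ≥0∞) < ⊤) :
    Summable fun k : ℕ => (2:ℝ) ^ (-((k:ℝ)+1)) * ‖a (k+1)‖ := by
  have hπ := Real.pi_pos
  have hcf := contOn a f hf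
  set s : Set (ℝ × ℝ) := (Ioo (0:ℝ) 1) ×ˢ (Ioo (-π) π) with hs_def
  have hs : MeasurableSet s := measurableSet_Ioo.prod measurableSet_Ioo
  set F : ℝ × ℝ → ℝ≥0∞ := fun p =>
    ENNReal.ofReal p.1 * (‖f ((p.1:ℂ) * Complex.exp ((p.2:ℂ) * I))‖₊ : ℝ≥0∞) with hF
  -- Tonelli
  have hmaps : MapsTo (fun p : ℝ × ℝ => (p.1:ℂ) * Complex.exp ((p.2:ℂ) * I)) s (ball (0:ℂ) 1) := by
    rintro ⟨p1, p2⟩ ⟨h1, _⟩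
    simp only [mem_ball, dist_zero_right, norm_mul, Complex.norm_real, Real.norm_eq_abs,
      Complex.norm_exp_ofReal_mul_I, mul_one, abs_of_pos h1.1]
    exact h1.2
  have hφ : Continuous (fun p : ℝ × ℝ => (p.1:ℂ) * Complex.exp ((p.2:ℂ) * I)) := by fun_prop
  have hFs : AEMeasurable F ((volume.restrict (Ioo (0:ℝ) 1)).prod (volume.restrict (Ioo (-π) π))) := by
    rw [Measure.prod_restrict]
    have h1 : ContinuousOn (fun p : ℝ × ℝ => f ((p.1:ℂ) * Complex.exp ((p.2:ℂ) * I))) s :=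
      hcf.comp hφ.continuousOn hmaps
    have h2 : AEMeasurable (fun p : ℝ × ℝ => f ((p.1:ℂ) * Complex.exp ((p.2:ℂ) * I)))
        ((volume : Measure (ℝ × ℝ)).restrict s) := h1.aemeasurable hs
    exact ((measurable_fst.ennreal_ofReal).aemeasurable.mul h2.enorm)
  have htone : ∫⁻ r in Ioo (0:ℝ) 1, ∫⁻ t in Ioo (-π) π, F (r, t) = ∫⁻ p in s, F p := by
    rw [hs_def, Measure.volume_eq_prod, ← Measure.prod_restrict, ← lintegral_prod F hFs]
  have hT : ∫⁻ r in Ioo (0:ℝ) 1, ∫⁻ t in Ioo (-π) π, F (r, t) < ⊤ := by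
    rw [htone]
    exact lt_of_le_of_lt (polarBound (fun z => (‖f z‖₊ : ℝ≥0∞))) hint
  -- the inner lower bound on each dyadic interval
  set c : ℕ → ℝ := fun k => 1 - 1/2^(k+2) with hc
  have hc01 : ∀ k, 0 < c k ∧ c k < 1 := by
    intro k
    constructor
    · have : (1:ℝ)/2^(k+2) ≤ 1/4 := by
        apply div_le_div_of_nonneg_left one_pos.le (by norm_num)
        calc (4:ℝ) = 2^2 := by norm_num
          _ ≤ 2^(k+2) := by
            apply pow_le_pow_right₀ (by norm_num)
            omega
      simp only [hc]; linarith
    · simp only [hc]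
      have : (0:ℝ) < 1/2^(k+2) := by positivity
      linarith
  have hcmono : StrictMono c := by
    intro k l hkl
    simp only [hc, sub_lt_sub_iff_left]
    apply div_lt_div_of_pos_left one_pos (by positivity)
    apply pow_lt_pow_right₀ (by norm_num)
    omega
  have hchalf : ∀ k, (1:ℝ)/2 ≤ c k := by
    intro k
    have : (1:ℝ)/2^(k+2) ≤ 1/4 := by
      apply div_le_div_of_nonneg_left one_pos.le (by norm_num)
      calc (4:ℝ) = 2^2 := by norm_num
        _ ≤ 2^(k+2) := by
          apply pow_le_pow_right₀ (by norm_num)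
          omega
    simp only [hc]; linarith
  -- lower bound for r^(2^(k+1)) on the interval
  have hpow : ∀ k : ℕ, ∀ r ∈ Ioo (c k) (c (k+1)), (1:ℝ)/2 ≤ r ^ (2^(k+1)) := by
    intro k r hr
    have h1 : c k ≤ r := hr.1.le
    have h0 : (0:ℝ) ≤ c k := (hc01 k).1.le
    calc (1:ℝ)/2 ≤ (c k) ^ (2^(k+1)) := by
          have hple : (1:ℝ)/2^(k+2) ≤ 1 := by
            rw [div_le_one (by positivity)]
            exact one_le_pow₀ (by norm_num)
          have hb := one_add_mul_le_pow (a := -(1/2^(k+2) : ℝ)) (by linarith) (2^(k+1))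
          have he : (1:ℝ) + (2^(k+1) : ℕ) * (-(1/2^(k+2))) = 1/2 := by
            push_cast
            have : (2:ℝ)^(k+2) = 2^(k+1) * 2 := by ring
            rw [this]
            field_simp
            ring
          have he2 : (1:ℝ) + (-(1/2^(k+2))) = c k := by simp [hc]; ring
          rw [he, he2] at hb
          exact hb
      _ ≤ r ^ (2^(k+1)) := pow_le_pow_left₀ h0 h1 _
  -- per-interval lower bound
  have hlow : ∀ k : ℕ, ENNReal.ofReal (π * ‖a (k+1)‖ / 2) * ENNReal.ofReal (1/2^(k+3)) ≤
      ∫⁻ r in Ioo (c k) (c (k+1)), ∫⁻ t in Ioo (-π) π, F (r, t) := by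
    intro k
    have hvol : volume (Ioo (c k) (c (k+1))) = ENNReal.ofReal (1/2^(k+3)) := by
      rw [Real.volume_Ioo]
      congr 1
      simp only [hc]
      have h1 : (2:ℝ)^(k+3) = 2^(k+2) * 2 := by ring
      rw [h1]
      have hx : (2:ℝ)^(k+2) ≠ 0 := by positivity
      field_simp
      ring
    calc ENNReal.ofReal (π * ‖a (k+1)‖ / 2) * ENNReal.ofReal (1/2^(k+3))
        = ENNReal.ofReal (π * ‖a (k+1)‖ / 2) * volume (Ioo (c k) (c (k+1))) := by rw [hvol]
      _ = ∫⁻ _ in Ioo (c k) (c (k+1)), ENNReal.ofReal (π * ‖a (k+1)‖ / 2) := by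
          rw [setLIntegral_const]
      _ ≤ ∫⁻ r in Ioo (c k) (c (k+1)), ∫⁻ t in Ioo (-π) π, F (r, t) := by
          apply setLIntegral_mono' measurableSet_Ioo
          intro r hr
          have hr0 : 0 < r := lt_trans (hc01 k).1 hr.1
          have hr1 : r < 1 := lt_trans hr.2 (hc01 (k+1)).2
          -- inner integral bound
          have hG : ENNReal.ofReal (2 * π * (‖a (k+1)‖ * r ^ (2^(k+1)))) ≤
              ∫⁻ t in Ioo (-π) π, (‖f ((r:ℂ) * Complex.exp ((t:ℂ) * I))‖₊ : ℝ≥0∞) := by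
            have hcont : Continuous (fun t : ℝ => f ((r:ℂ) * Complex.exp ((t:ℂ) * I))) := by
              apply hcf.comp_continuous (by fun_prop)
              intro t
              simp only [mem_ball, dist_zero_right, norm_mul, Complex.norm_real, Real.norm_eq_abs,
                Complex.norm_exp_ofReal_mul_I, mul_one, abs_of_pos hr0]
              exact hr1
            have hInt : IntegrableOn (fun t : ℝ => ‖f ((r:ℂ) * Complex.exp ((t:ℂ) * I))‖)
                (Ioc (-π) π) := (hcont.norm).integrableOn_Ioc
            calc ENNReal.ofReal (2 * π * (‖a (k+1)‖ * r ^ (2^(k+1))))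
                ≤ ENNReal.ofReal (∫ t in Ioc (-π) π, ‖f ((r:ℂ) * Complex.exp ((t:ℂ) * I))‖) :=
                  ENNReal.ofReal_le_ofReal (coeffBound a f hf hr0 hr1 k)
              _ = ∫⁻ t in Ioc (-π) π, ENNReal.ofReal ‖f ((r:ℂ) * Complex.exp ((t:ℂ) * I))‖ :=
                  ofReal_integral_eq_lintegral_ofReal hInt
                    (Filter.Eventually.of_forall (fun t => norm_nonneg _))
              _ = ∫⁻ t in Ioc (-π) π, (‖f ((r:ℂ) * Complex.exp ((t:ℂ) * I))‖₊ : ℝ≥0∞) := by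
                  refine lintegral_congr fun t => ?_
                  rw [ENNReal.ofReal_eq_coe_nnreal (norm_nonneg _)]; rfl
              _ = ∫⁻ t in Ioo (-π) π, (‖f ((r:ℂ) * Complex.exp ((t:ℂ) * I))‖₊ : ℝ≥0∞) :=
                  (setLIntegral_congr Ioo_ae_eq_Ioc).symm
          have hr12 : (1:ℝ)/2 ≤ r := le_trans (hchalf k) hr.1.le
          have hpk := hpow k r hr
          calc ENNReal.ofReal (π * ‖a (k+1)‖ / 2)
              = ENNReal.ofReal (1/2) * ENNReal.ofReal (2 * π * (‖a (k+1)‖ * (1/2))) := by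
                rw [← ENNReal.ofReal_mul (by norm_num)]
                congr 1
                ring
            _ ≤ ENNReal.ofReal r * ENNReal.ofReal (2 * π * (‖a (k+1)‖ * r ^ (2^(k+1)))) := by
                apply mul_le_mul' (ENNReal.ofReal_le_ofReal hr12)
                apply ENNReal.ofReal_le_ofReal
                apply mul_le_mul_of_nonneg_left _ (by positivity)
                exact mul_le_mul_of_nonneg_left hpk (norm_nonneg _)
            _ ≤ ENNReal.ofReal r * ∫⁻ t in Ioo (-π) π,
                  (‖f ((r:ℂ) * Complex.exp ((t:ℂ) * I))‖₊ : ℝ≥0∞) := mul_le_mul' le_rfl hG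
            _ = ∫⁻ t in Ioo (-π) π, F (r, t) := by
                rw [hF]
                exact (lintegral_const_mul' _ _ ENNReal.ofReal_ne_top).symm
  -- sum over disjoint intervals
  have hdisj : Pairwise (Function.onFun Disjoint (fun k => Ioo (c k) (c (k+1)))) := by
    intro k l hkl
    simp only [Function.onFun, Set.Ioo_disjoint_Ioo]
    rcases lt_or_gt_of_ne hkl with h | h
    · exact le_trans (min_le_left _ _) (le_max_of_le_right (hcmono.le_iff_le.2 h))
    · exact le_trans (min_le_right _ _) (le_max_of_le_left (hcmono.le_iff_le.2 h))
  have hUsub : (⋃ k, Ioo (c k) (c (k+1))) ⊆ Ioo (0:ℝ) 1 := by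
    rintro r ⟨_, ⟨k, rfl⟩, hr⟩
    exact ⟨lt_trans (hc01 k).1 hr.1, lt_trans hr.2 (hc01 (k+1)).2⟩
  have hsum_eq : ∑' k : ℕ, ∫⁻ r in Ioo (c k) (c (k+1)), ∫⁻ t in Ioo (-π) π, F (r, t)
      = ∫⁻ r in ⋃ k, Ioo (c k) (c (k+1)), ∫⁻ t in Ioo (-π) π, F (r, t) := by
    rw [Measure.restrict_iUnion hdisj (fun k => measurableSet_Ioo), lintegral_sum_measure]
  have hfin : ∑' k : ℕ, ENNReal.ofReal (π * ‖a (k+1)‖ / 2 * (1/2^(k+3))) ≠ ⊤ := by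
    have hle : ∑' k : ℕ, ENNReal.ofReal (π * ‖a (k+1)‖ / 2 * (1/2^(k+3)))
        ≤ ∫⁻ r in Ioo (0:ℝ) 1, ∫⁻ t in Ioo (-π) π, F (r, t) := by
      calc ∑' k : ℕ, ENNReal.ofReal (π * ‖a (k+1)‖ / 2 * (1/2^(k+3)))
          = ∑' k : ℕ, ENNReal.ofReal (π * ‖a (k+1)‖ / 2) * ENNReal.ofReal (1/2^(k+3)) := by
            refine tsum_congr fun k => ?_
            rw [ENNReal.ofReal_mul (by positivity)]
        _ ≤ ∑' k : ℕ, ∫⁻ r in Ioo (c k) (c (k+1)), ∫⁻ t in Ioo (-π) π, F (r, t) :=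
            ENNReal.tsum_le_tsum hlow
        _ = ∫⁻ r in ⋃ k, Ioo (c k) (c (k+1)), ∫⁻ t in Ioo (-π) π, F (r, t) := hsum_eq
        _ ≤ ∫⁻ r in Ioo (0:ℝ) 1, ∫⁻ t in Ioo (-π) π, F (r, t) := lintegral_mono_set hUsub
    exact (lt_of_le_of_lt hle hT).ne
  have hv : Summable (fun k : ℕ => π * ‖a (k+1)‖ / 2 * (1/2^(k+3))) := by
    have := ENNReal.summable_toReal hfin
    refine this.congr fun k => ?_
    rw [ENNReal.toReal_ofReal (by positivity)]
  refine (hv.mul_left (8/π)).congr fun k => ?_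
  rw [show -((k:ℝ)+1) = -(((k+1:ℕ)):ℝ) by push_cast; ring, Real.rpow_neg (by norm_num),
    Real.rpow_natCast]
  have h23 : (2:ℝ)^(k+3) = 2^(k+1)*4 := by ring
  rw [h23]
  have h2k : (2:ℝ)^(k+1) ≠ 0 := by positivity
  field_simp
  ring
end

section
/- If f(z) = Σ_{k≥1} a_k z^{2^k} is analytic on the unit disk and f' belongs to the Bergman space A^1(𝔻), then Σ_{k≥1} |a_k| < ∞. -/
open Complex Metric MeasureTheory Real Set
open scoped Classical NNReal ENNReal

theorem my_lintegral_polar (g : ℝ × ℝ → ℝ≥0∞) :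
    (∫⁻ p in polarCoord.target, ENNReal.ofReal p.1 * g (polarCoord.symm p)) = ∫⁻ p, g p := by
  set B : ℝ × ℝ → ℝ × ℝ →L[ℝ] ℝ × ℝ := fun p =>
    LinearMap.toContinuousLinearMap (Matrix.toLin (Module.Basis.finTwoProd ℝ) (Module.Basis.finTwoProd ℝ)
      !![Real.cos p.2, -p.1 * Real.sin p.2; Real.sin p.2, p.1 * Real.cos p.2])
  have A : ∀ p ∈ polarCoord.target, HasFDerivWithinAt polarCoord.symm (B p) polarCoord.target p :=
    fun p _ => (hasFDerivAt_polarCoord_symm p).hasFDerivWithinAt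
  have B_det : ∀ p, (B p).det = p.1 := by
    intro p
    conv_rhs => rw [← one_mul p.1, ← Real.cos_sq_add_sin_sq p.2]
    simp only [B, neg_mul, LinearMap.det_toContinuousLinearMap, LinearMap.det_toLin,
      Matrix.det_fin_two_of, sub_neg_eq_add]
    ring
  symm
  calc
    ∫⁻ p, g p = ∫⁻ p in polarCoord.source, g p := by
      rw [← setLIntegral_univ]
      exact setLIntegral_congr polarCoord_source_ae_eq_univ.symm
    _ = ∫⁻ p in polarCoord.symm '' polarCoord.target, g p := by
      rw [polarCoord.symm_image_target_eq_source]
    _ = ∫⁻ p in polarCoord.target, ENNReal.ofReal |(B p).det| * g (polarCoord.symm p) := by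
      apply lintegral_image_eq_lintegral_abs_det_fderiv_mul volume
        polarCoord.open_target.measurableSet A
      intro p hp q hq h
      have := polarCoord.symm.injOn (by simpa using hp) (by simpa using hq) h
      exact this
    _ = ∫⁻ p in polarCoord.target, ENNReal.ofReal p.1 * g (polarCoord.symm p) := by
      refine setLIntegral_congr_fun polarCoord.open_target.measurableSet ?_
      intro x hx
      dsimp only
      rw [B_det, abs_of_pos hx.1]

theorem my_lintegral_polar_complex (g : ℂ → ℝ≥0∞) :
    (∫⁻ p in polarCoord.target, ENNReal.ofReal p.1 * g (Complex.polarCoord.symm p)) = ∫⁻ z, g z := by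
  rw [← (Complex.volume_preserving_equiv_real_prod.symm).lintegral_comp_emb
    Complex.measurableEquivRealProd.symm.measurableEmbedding, ← my_lintegral_polar]
  rfl

theorem my_exp_bound (n : ℕ) (hn : 2 ≤ n) : Real.exp (-2) ≤ (1 - 1/(n:ℝ))^n := by
  have hn0 : (0:ℝ) < n := by positivity
  have h1 : Real.exp (-2/(n:ℝ)) ≤ 1 - 1/(n:ℝ) := by
    have h2 : 1 + 2/(n:ℝ) ≤ Real.exp (2/(n:ℝ)) := Real.add_one_le_exp _ |>.trans_eq' (by ring_nf)
    have h3 : (1:ℝ) ≤ (1 + 2/(n:ℝ)) * (1 - 1/(n:ℝ)) := by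
      have : (1 + 2/(n:ℝ)) * (1 - 1/(n:ℝ)) = 1 + ((n:ℝ) - 2)/(n:ℝ)^2 := by
        field_simp; ring
      rw [this]
      have : (0:ℝ) ≤ ((n:ℝ) - 2)/(n:ℝ)^2 := by
        apply div_nonneg _ (by positivity)
        have : (2:ℝ) ≤ n := by exact_mod_cast hn
        linarith
      linarith
    have hpos : (0:ℝ) < 1 - 1/(n:ℝ) := by
      have h2n : (2:ℝ) ≤ n := by exact_mod_cast hn
      have : 1/(n:ℝ) ≤ 1/2 := by
        apply one_div_le_one_div_of_le <;> linarith
      linarith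
    have h4 : (1:ℝ) ≤ Real.exp (2/(n:ℝ)) * (1 - 1/(n:ℝ)) := by
      calc (1:ℝ) ≤ (1 + 2/(n:ℝ)) * (1 - 1/(n:ℝ)) := h3
        _ ≤ Real.exp (2/(n:ℝ)) * (1 - 1/(n:ℝ)) := by
            apply mul_le_mul_of_nonneg_right h2 hpos.le
    have : Real.exp (-2/(n:ℝ)) = (Real.exp (2/(n:ℝ)))⁻¹ := by
      rw [← Real.exp_neg]; ring_nf
    rw [this, inv_le_iff_one_le_mul₀ (Real.exp_pos _)]
    linarith [h4]
  calc Real.exp (-2) = (Real.exp (-2/(n:ℝ)))^n := by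
        rw [← Real.exp_nat_mul]; congr 1; field_simp
    _ ≤ (1 - 1/(n:ℝ))^n := pow_le_pow_left₀ (Real.exp_pos _).le h1 n

theorem my_coeff_bound (f : ℂ → ℂ) (a : ℕ → ℂ)
    (hf : ∀ z ∈ ball (0:ℂ) 1, HasSum (fun k : ℕ => a (k+1) * z ^ (2^(k+1))) (f z))
    (hdiff : DifferentiableOn ℂ f (ball (0:ℂ) 1))
    (k : ℕ) {ρ : ℝ} (h0 : 0 < ρ) (h1 : ρ < 1) :
    ((2^(k+1) : ℕ) : ℝ) * ‖a (k+1)‖ * ρ^((2^(k+1) : ℕ) - 1) ≤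
      (2*π)⁻¹ * ∫ t in (0:ℝ)..2*π, ‖deriv f (circleMap 0 ρ t)‖ := by
  classical
  set c : ℕ → ℂ := fun n => if ∃ j : ℕ, n = 2^(j+1) then a (Nat.log 2 n) else 0 with hcdef
  have hc : ∀ j : ℕ, c (2^(j+1)) = a (j+1) := by
    intro j
    simp only [hcdef]
    rw [if_pos ⟨j, rfl⟩, Nat.log_pow one_lt_two]
  have hsum : ∀ z ∈ ball (0:ℂ) 1, HasSum (fun n => c n * z^n) (f z) := by
    intro z hz
    have hmono : StrictMono (fun j : ℕ => 2^(j+1)) := fun x y h =>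
      Nat.pow_lt_pow_right one_lt_two (by omega)
    rw [← Function.Injective.hasSum_iff hmono.injective ?_]
    · have heq : ((fun n => c n * z^n) ∘ (fun j : ℕ => 2^(j+1)))
          = fun j : ℕ => a (j+1) * z ^ (2^(j+1)) := by
        funext j; simp [Function.comp, hc j]
      rw [heq]; exact hf z hz
    · intro n hn
      have hne : ¬ ∃ j : ℕ, n = 2^(j+1) := by
        rintro ⟨j, rfl⟩; exact hn ⟨j, rfl⟩
      simp [hcdef, hne]
  set P : FormalMultilinearSeries ℂ ℂ ℂ :=
    fun n => ContinuousMultilinearMap.mkPiRing ℂ (Fin n) (c n) with hPdef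
  have hPapp : ∀ n (y : ℂ), (P n fun _ => y) = c n * y^n := by
    intro n y
    simp [hPdef, ContinuousMultilinearMap.mkPiRing_apply, smul_eq_mul, mul_comm]
  have hP : HasFPowerSeriesOnBall f P 0 1 := by
    refine ⟨?_, zero_lt_one, ?_⟩
    · apply ENNReal.le_of_forall_nnreal_lt
      intro r hr
      have hr1 : (r:ℝ) < 1 := by exact_mod_cast hr
      have hz : ((r:ℝ) : ℂ) ∈ ball (0:ℂ) 1 := by
        simp only [mem_ball_zero_iff, Complex.norm_real]
        rw [Real.norm_eq_abs, _root_.abs_of_nonneg r.coe_nonneg]; exact hr1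
      have h2 := ((hsum _ hz).summable.tendsto_atTop_zero).norm
      apply FormalMultilinearSeries.le_radius_of_tendsto (l := ‖(0:ℂ)‖)
      convert h2 using 2 with n
      rw [ContinuousMultilinearMap.norm_mkPiRing, norm_mul, norm_pow, Complex.norm_real,
        Real.norm_eq_abs, _root_.abs_of_nonneg r.coe_nonneg]
    · intro y hy
      have hy' : y ∈ ball (0:ℂ) 1 := by
        rw [mem_ball_zero_iff]
        simpa [← ofReal_norm, ENNReal.ofReal_lt_one] using hy
      have := hsum y hy'
      simp only [zero_add]
      have e : (fun n => P n fun _ => y) = fun n => c n * y^n := funext fun n => hPapp n y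
      rw [e]; exact this
  set D := (ContinuousLinearMap.apply ℂ ℂ (1:ℂ)).compFormalMultilinearSeries P.derivSeries
    with hDdef
  have hD : HasFPowerSeriesOnBall (deriv f) D 0 1 := by
    have h2 := (ContinuousLinearMap.apply ℂ ℂ (1:ℂ)).comp_hasFPowerSeriesOnBall hP.fderiv
    exact h2.congr fun z _ => fderiv_apply_one_eq_deriv
  have hDcoeff : ∀ m : ℕ, (D m fun _ => (1:ℂ)) = ((m+1 : ℕ) : ℂ) * c (m+1) := by
    intro m
    have h3 := P.derivSeries_apply_diag m (1:ℂ)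
    calc (D m fun _ => (1:ℂ)) = P.derivSeries m (fun _ => 1) 1 := rfl
      _ = (m+1) • (P (m+1) fun _ => (1:ℂ)) := h3
      _ = ((m+1 : ℕ) : ℂ) * c (m+1) := by
          rw [hPapp]; simp [nsmul_eq_mul]
  -- Cauchy series for deriv f on ball of radius ρ
  have hand : DifferentiableOn ℂ (deriv f) (closedBall (0:ℂ) ρ) :=
    ((hdiff.analyticOnNhd isOpen_ball).deriv.differentiableOn).mono
      (closedBall_subset_ball h1)
  lift ρ to ℝ≥0 using h0.le with ρ' hρ'
  have hQ : HasFPowerSeriesOnBall (deriv f) (cauchyPowerSeries (deriv f) 0 ρ') 0 ρ' :=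
    hand.hasFPowerSeriesOnBall (by exact_mod_cast h0)
  have hEq : D = cauchyPowerSeries (deriv f) 0 ρ' :=
    hD.hasFPowerSeriesAt.eq_formalMultilinearSeries hQ.hasFPowerSeriesAt
  set m : ℕ := 2^(k+1) - 1 with hmdef
  have hm : m + 1 = 2^(k+1) := Nat.succ_pred_eq_of_pos (Nat.pow_pos (by norm_num))
  set I : ℝ := ∫ t in (0:ℝ)..2*π, ‖deriv f (circleMap 0 ρ' t)‖ with hIdef
  have hI0 : 0 ≤ I := intervalIntegral.integral_nonneg Real.two_pi_pos.le
    fun _ _ => norm_nonneg _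
  have hup : ‖(D m fun _ => (1:ℂ))‖ ≤ ((2*π)⁻¹ * I) * |(ρ':ℝ)|⁻¹^m := by
    calc ‖(D m fun _ => (1:ℂ))‖ ≤ ‖D m‖ * ∏ _i : Fin m, ‖(1:ℂ)‖ := (D m).le_opNorm _
      _ = ‖D m‖ := by simp
      _ ≤ ((2*π)⁻¹ * I) * |(ρ':ℝ)|⁻¹^m := by
          rw [hEq]; exact norm_cauchyPowerSeries_le (deriv f) 0 ρ' m
  have hval : ‖(D m fun _ => (1:ℂ))‖ = ((2^(k+1):ℕ) : ℝ) * ‖a (k+1)‖ := by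
    rw [hDcoeff m, hm, hc k, norm_mul, Complex.norm_natCast]
  rw [hval] at hup
  have habs : |(ρ':ℝ)| = (ρ':ℝ) := abs_of_pos h0
  rw [habs] at hup
  have hpow : (0:ℝ) < (ρ':ℝ)^m := pow_pos h0 m
  have := mul_le_mul_of_nonneg_right hup hpow.le
  rw [mul_assoc ((2*π)⁻¹ * I), ← mul_pow, inv_mul_cancel₀ (ne_of_gt h0), one_pow, mul_one]
    at this
  calc ((2^(k+1) : ℕ) : ℝ) * ‖a (k+1)‖ * (ρ':ℝ)^((2^(k+1) : ℕ) - 1)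
      = ((2^(k+1):ℕ) : ℝ) * ‖a (k+1)‖ * (ρ':ℝ)^m := by rw [hmdef]
    _ ≤ (2*π)⁻¹ * I := this

theorem stmt15 (f : ℂ → ℂ) (a : ℕ → ℂ)
    (hf : ∀ z ∈ ball (0:ℂ) 1, HasSum (fun k : ℕ => a (k+1) * z ^ (2^(k+1))) (f z))
    (hdiff : DifferentiableOn ℂ f (ball (0:ℂ) 1))
    (hint : ∫⁻ z in ball (0:ℂ) 1, (‖deriv f z‖₊ : ℝ≥0∞) < ⊤) :
    Summable fun k : ℕ => ‖a (k+1)‖ := by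
  classical
  have hdc : ContinuousOn (deriv f) (ball (0:ℂ) 1) :=
    ((hdiff.analyticOnNhd isOpen_ball).deriv).continuousOn
  set g : ℂ → ℝ≥0∞ := (ball (0:ℂ) 1).indicator (fun z => (‖deriv f z‖₊ : ℝ≥0∞)) with hgdef
  have hgmeas : Measurable g :=
    ((measurable_deriv f).nnnorm.coe_nnreal_ennreal).indicator measurableSet_ball
  set T : ℝ≥0∞ := ∫⁻ z, g z with hTdef
  have hTlt : T < ⊤ := by
    rw [hTdef, hgdef, lintegral_indicator measurableSet_ball]
    exact hint
  -- polar coordinates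
  set H : ℝ × ℝ → ℝ≥0∞ := fun p => ENNReal.ofReal p.1 * g (Complex.polarCoord.symm p) with hHdef
  have hH : ∫⁻ p in polarCoord.target, H p = T := my_lintegral_polar_complex g
  have hsymmc : Continuous fun p : ℝ × ℝ => Complex.polarCoord.symm p := by
    simp only [Complex.polarCoord_symm_apply]
    fun_prop
  have hHmeas : Measurable H :=
    (ENNReal.measurable_ofReal.comp measurable_fst).mul (hgmeas.comp hsymmc.measurable)
  -- annuli
  set t : ℕ → ℝ := fun k => (2:ℝ)⁻¹ ^ (k+1) with htdef
  have ht0 : ∀ k, 0 < t k := fun k => by positivity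
  have hthalf : ∀ k, t k ≤ 1/2 := by
    intro k
    calc t k ≤ (2:ℝ)⁻¹ ^ 1 := pow_le_pow_of_le_one (by norm_num) (by norm_num) (by omega)
      _ = 1/2 := by norm_num
  set r0 : ℕ → ℝ := fun k => 1 - t k with hr0def
  set r1 : ℕ → ℝ := fun k => 1 - t k / 2 with hr1def
  have hr00 : ∀ k, 0 < r0 k := fun k => by
    have := hthalf k; simp only [hr0def]; linarith
  have hr01 : ∀ k, r0 k < r1 k := fun k => by
    have := ht0 k; simp only [hr0def, hr1def]; linarith
  have hr11 : ∀ k, r1 k < 1 := fun k => by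
    have := ht0 k; simp only [hr1def]; linarith
  set S : ℕ → Set (ℝ × ℝ) := fun k => Ioo (r0 k) (r1 k) ×ˢ Ioo (-π) π with hSdef
  have hSmeas : ∀ k, MeasurableSet (S k) := fun k =>
    measurableSet_Ioo.prod measurableSet_Ioo
  have hSsub : ∀ k, S k ⊆ polarCoord.target := by
    intro k p hp
    rw [polarCoord_target]
    exact ⟨(hr00 k).trans hp.1.1, hp.2⟩
  -- the key lower bound
  have hnt : ∀ k : ℕ, ((2^(k+1) : ℕ) : ℝ) * t k = 1 := by
    intro k
    simp only [htdef]
    push_cast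
    rw [← mul_pow]
    norm_num
  have key : ∀ k : ℕ,
      ENNReal.ofReal (π * Real.exp (-2) * ‖a (k+1)‖) ≤ ∫⁻ p in S k, H p := by
    intro k
    set n : ℕ := 2^(k+1) with hndef
    have hn2 : 2 ≤ n := by
      simp only [hndef]
      calc 2 = 2^1 := by norm_num
        _ ≤ 2^(k+1) := Nat.pow_le_pow_right (by norm_num) (by omega)
    -- inner integral computation for fixed ρ
    have inner_eq : ∀ ρ : ℝ, 0 < ρ → ρ < 1 →
        (∫⁻ θ in Ioo (-π) π, H (ρ, θ)) =
          ENNReal.ofReal ρ *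
            ENNReal.ofReal (∫ s in (0:ℝ)..2*π, ‖deriv f (circleMap 0 ρ s)‖) := by
      intro ρ hρ0 hρ1
      have hmem : ∀ θ : ℝ, circleMap 0 ρ θ ∈ ball (0:ℂ) 1 := by
        intro θ
        rw [mem_ball_zero_iff, norm_circleMap_zero,
          _root_.abs_of_pos hρ0]
        exact hρ1
      have hcirc : ∀ θ : ℝ, Complex.polarCoord.symm (ρ, θ) = circleMap 0 ρ θ := by
        intro θ
        rw [Complex.polarCoord_symm_apply]
        simp [circleMap, Complex.exp_mul_I, Complex.ofReal_cos, Complex.ofReal_sin]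
      have hHval : ∀ θ : ℝ, H (ρ, θ) =
          ENNReal.ofReal ρ * (‖deriv f (circleMap 0 ρ θ)‖₊ : ℝ≥0∞) := by
        intro θ
        simp only [hHdef, hgdef, hcirc θ]
        rw [Set.indicator_of_mem (hmem θ)]
      simp only [hHval]
      have hmeas2 : Measurable fun θ : ℝ => ((‖deriv f (circleMap 0 ρ θ)‖₊ : ℝ≥0∞)) :=
        ((measurable_deriv f).nnnorm.coe_nnreal_ennreal).comp
          (continuous_circleMap 0 ρ).measurable
      rw [lintegral_const_mul _ hmeas2]
      congr 1
      have hcont : Continuous fun θ : ℝ => ‖deriv f (circleMap 0 ρ θ)‖ :=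
        (hdc.comp_continuous (continuous_circleMap 0 ρ) hmem).norm
      have hInt : IntegrableOn (fun θ : ℝ => ‖deriv f (circleMap 0 ρ θ)‖) (Ioo (-π) π) :=
        (hcont.integrableOn_Icc).mono_set Ioo_subset_Icc_self
      simp only [← enorm_eq_nnnorm, ← ofReal_norm]
      rw [← ofReal_integral_eq_lintegral_ofReal hInt
        (Filter.Eventually.of_forall fun θ => norm_nonneg _)]
      · congr 1
        have hper : Function.Periodic (fun θ : ℝ => ‖deriv f (circleMap 0 ρ θ)‖) (2*π) := by
          intro θ
          simp [periodic_circleMap 0 ρ θ]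
        have h1 : ∫ θ in Ioo (-π) π, ‖deriv f (circleMap 0 ρ θ)‖ =
            ∫ θ in (-π)..π, ‖deriv f (circleMap 0 ρ θ)‖ := by
          rw [intervalIntegral.integral_of_le (by linarith [Real.pi_pos]),
            integral_Ioc_eq_integral_Ioo]
        rw [h1]
        have h2 := hper.intervalIntegral_add_eq (-π) 0
        simp only [zero_add] at h2
        rw [show -π + 2*π = π by ring] at h2
        exact h2
    -- lower bound pointwise in ρ
    have hconst : ∀ ρ ∈ Ioo (r0 k) (r1 k),
        ENNReal.ofReal (2*π*((n:ℕ):ℝ)*Real.exp (-2) * ‖a (k+1)‖) ≤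
          ∫⁻ θ in Ioo (-π) π, H (ρ, θ) := by
      intro ρ hρ
      have hρ0 : 0 < ρ := (hr00 k).trans hρ.1
      have hρ1 : ρ < 1 := hρ.2.trans (hr11 k)
      rw [inner_eq ρ hρ0 hρ1]
      have hcb := my_coeff_bound f a hf hdiff k hρ0 hρ1
      have h2pi : (0:ℝ) < 2*π := Real.two_pi_pos
      -- I ≥ 2π n ‖a‖ ρ^{n-1}
      have hIlower : 2*π * (((n:ℕ):ℝ) * ‖a (k+1)‖ * ρ^(n - 1)) ≤
          ∫ s in (0:ℝ)..2*π, ‖deriv f (circleMap 0 ρ s)‖ := by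
        have h3 := mul_le_mul_of_nonneg_left hcb h2pi.le
        calc 2*π * (((n:ℕ):ℝ) * ‖a (k+1)‖ * ρ^(n - 1))
            ≤ 2*π * ((2*π)⁻¹ * ∫ s in (0:ℝ)..2*π, ‖deriv f (circleMap 0 ρ s)‖) := h3
          _ = ∫ s in (0:ℝ)..2*π, ‖deriv f (circleMap 0 ρ s)‖ := by
              field_simp
      calc ENNReal.ofReal (2*π*((n:ℕ):ℝ)*Real.exp (-2) * ‖a (k+1)‖)
          ≤ ENNReal.ofReal (ρ * (2*π * (((n:ℕ):ℝ) * ‖a (k+1)‖ * ρ^(n - 1)))) := by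
            apply ENNReal.ofReal_le_ofReal
            have hρn : Real.exp (-2) ≤ ρ^n := by
              have hn0 : (0:ℝ) < ((n:ℕ):ℝ) := by positivity
              have htk : t k = 1/((n:ℕ):ℝ) := by
                rw [eq_div_iff hn0.ne', mul_comm]
                exact hnt k
              have h1n : 1 - 1/((n:ℕ):ℝ) = r0 k := by
                simp only [hr0def, htk]
              calc Real.exp (-2) ≤ (1 - 1/((n:ℕ):ℝ))^n := my_exp_bound n hn2
                _ = (r0 k)^n := by rw [h1n]
                _ ≤ ρ^n := pow_le_pow_left₀ (hr00 k).le hρ.1.le n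
            have hsplit : ρ * ρ^(n-1) = ρ^n := by
              rw [← pow_succ']
              congr 1
              omega
            have hexp : ρ * (2*π * (((n:ℕ):ℝ) * ‖a (k+1)‖ * ρ^(n - 1))) =
                2*π * ‖a (k+1)‖ * (((n:ℕ):ℝ) * ρ^n) := by
              rw [← hsplit]; ring
            rw [hexp]
            calc 2*π*((n:ℕ):ℝ)*Real.exp (-2) * ‖a (k+1)‖
                = 2*π*‖a (k+1)‖ * (((n:ℕ):ℝ) * Real.exp (-2)) := by ring
              _ ≤ 2*π*‖a (k+1)‖ * (((n:ℕ):ℝ) * ρ^n) := by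
                  apply mul_le_mul_of_nonneg_left _ (by positivity)
                  exact mul_le_mul_of_nonneg_left hρn (by positivity)
        _ ≤ ENNReal.ofReal ρ *
            ENNReal.ofReal (∫ s in (0:ℝ)..2*π, ‖deriv f (circleMap 0 ρ s)‖) := by
            rw [ENNReal.ofReal_mul hρ0.le]
            exact mul_le_mul_right (ENNReal.ofReal_le_ofReal hIlower) _
    -- product decomposition
    have hprod : ∫⁻ p in S k, H p
        = ∫⁻ ρ in Ioo (r0 k) (r1 k), ∫⁻ θ in Ioo (-π) π, H (ρ, θ) := by
      have hmeq : (volume : Measure (ℝ × ℝ)).restrict (S k)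
          = ((volume : Measure ℝ).restrict (Ioo (r0 k) (r1 k))).prod
              ((volume : Measure ℝ).restrict (Ioo (-π) π)) := by
        rw [Measure.prod_restrict, ← MeasureTheory.Measure.volume_eq_prod]
      rw [hmeq, lintegral_prod _ hHmeas.aemeasurable]
    have hntk : ((n:ℕ):ℝ) * t k = 1 := hnt k
    calc ENNReal.ofReal (π * Real.exp (-2) * ‖a (k+1)‖)
        = ENNReal.ofReal (2*π*((n:ℕ):ℝ)*Real.exp (-2) * ‖a (k+1)‖ * (t k / 2)) := by
          congr 1
          have : 2*π*((n:ℕ):ℝ)*Real.exp (-2) * ‖a (k+1)‖ * (t k / 2)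
              = π * Real.exp (-2) * ‖a (k+1)‖ * (((n:ℕ):ℝ) * t k) := by ring
          rw [this, hntk, mul_one]
      _ = ENNReal.ofReal (2*π*((n:ℕ):ℝ)*Real.exp (-2) * ‖a (k+1)‖)
            * ENNReal.ofReal (t k / 2) := by
          rw [← ENNReal.ofReal_mul (by positivity)]
      _ = ENNReal.ofReal (2*π*((n:ℕ):ℝ)*Real.exp (-2) * ‖a (k+1)‖)
            * volume (Ioo (r0 k) (r1 k)) := by
          rw [Real.volume_Ioo]
          congr 1
          simp only [hr0def, hr1def]
          ring
      _ = ∫⁻ _ρ in Ioo (r0 k) (r1 k),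
            ENNReal.ofReal (2*π*((n:ℕ):ℝ)*Real.exp (-2) * ‖a (k+1)‖) :=
          (setLIntegral_const _ _).symm
      _ ≤ ∫⁻ ρ in Ioo (r0 k) (r1 k), ∫⁻ θ in Ioo (-π) π, H (ρ, θ) :=
          setLIntegral_mono' measurableSet_Ioo hconst
      _ = ∫⁻ p in S k, H p := hprod.symm
  -- disjointness of annuli
  have hdisj : ∀ {j l : ℕ}, j < l → Disjoint (S j) (S l) := by
    intro j l hjl
    have h1 : r1 j ≤ r0 l := by
      have h2 : t l ≤ t j / 2 := by
        have h3 : t l ≤ (2:ℝ)⁻¹ ^ (j+2) :=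
          pow_le_pow_of_le_one (by norm_num) (by norm_num) (by omega)
        have h4 : (2:ℝ)⁻¹ ^ (j+2) = t j / 2 := by
          simp only [htdef, pow_succ]
          ring
        linarith
      simp only [hr0def, hr1def]
      linarith
    rw [Set.disjoint_left]
    rintro ⟨x, y⟩ hx hy
    have hx1 : x < r1 j := hx.1.2
    have hy1 : r0 l < x := hy.1.1
    linarith
  -- summing over annuli
  have hsumN : ∀ N : ℕ,
      ∑ k ∈ Finset.range N, ENNReal.ofReal (π * Real.exp (-2) * ‖a (k+1)‖) ≤ T := by
    intro N
    calc ∑ k ∈ Finset.range N, ENNReal.ofReal (π * Real.exp (-2) * ‖a (k+1)‖)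
        ≤ ∑ k ∈ Finset.range N, ∫⁻ p in S k, H p := Finset.sum_le_sum fun k _ => key k
      _ = ∫⁻ p in ⋃ k ∈ Finset.range N, S k, H p := by
          refine (lintegral_biUnion_finset ?_ (fun k _ => hSmeas k) H).symm
          intro j _ l _ hne
          rcases lt_or_gt_of_ne hne with h | h
          · exact hdisj h
          · exact (hdisj h).symm
      _ ≤ ∫⁻ p in polarCoord.target, H p :=
          lintegral_mono_set (Set.iUnion₂_subset fun k _ => hSsub k)
      _ = T := hH
  have hC : (0:ℝ) < π * Real.exp (-2) := by positivity
  have hreal : ∀ N : ℕ,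
      ∑ k ∈ Finset.range N, ‖a (k+1)‖ ≤ T.toReal / (π * Real.exp (-2)) := by
    intro N
    have h2 : ENNReal.ofReal (∑ k ∈ Finset.range N, π * Real.exp (-2) * ‖a (k+1)‖) ≤ T := by
      rw [ENNReal.ofReal_sum_of_nonneg (fun k _ => by positivity)]
      exact hsumN N
    have h3 : ∑ k ∈ Finset.range N, π * Real.exp (-2) * ‖a (k+1)‖ ≤ T.toReal :=
      (ENNReal.ofReal_le_iff_le_toReal hTlt.ne).mp h2
    rw [← Finset.mul_sum] at h3
    rw [le_div_iff₀' hC]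
    exact h3
  exact summable_of_sum_range_le (fun n => norm_nonneg _) hreal
end

section
/- For the polynomial P_n(z) = Σ_{k=1}^n z^{2^k}, there exist absolute positive constants c₁, c₂ with c₁ n ≤ ∫_𝔻 |P_n'(z)| dA(z) ≤ c₂ n, while ‖P_n‖_{H^2} = sqrt(n). Consequently ∫_𝔻|P_n'| dA / ‖P_n‖_{H^2} ≥ c sqrt(n) = c sqrt(log₂ deg P_n) for an absolute constant c > 0. -/
open Complex Metric MeasureTheory Real Set
open scoped Classical NNReal ENNReal

noncomputable def Pn (n : ℕ) : ℂ → ℂ := fun z => ∑ k ∈ Finset.Icc 1 n, z ^ (2^k)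

-- H1: orthogonality
lemma key_orth (a b : ℕ) :
    ∫ t in (0:ℝ)..(2*π), Complex.exp (((a:ℂ) - (b:ℂ)) * (t * Complex.I))
      = if a = b then ((2*π : ℝ) : ℂ) else 0 := by
  by_cases h : a = b
  · simp [h, intervalIntegral.integral_const]
  · rw [if_neg h]
    have hc : ((a:ℂ) - b) * Complex.I ≠ 0 := by
      simp only [ne_eq, mul_eq_zero, Complex.I_ne_zero, or_false, sub_eq_zero]
      exact_mod_cast h
    have : ∀ t : ℝ, ((a:ℂ) - b) * (t * Complex.I) = (((a:ℂ) - b) * Complex.I) * t := by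
      intro t; ring
    simp_rw [this]
    rw [integral_exp_mul_complex hc]
    have h1 : (((a:ℂ) - b) * Complex.I) * ((2*π : ℝ):ℂ) = (((a:ℤ) - (b:ℤ) : ℤ) : ℂ) * (2*π*Complex.I) := by
      push_cast; ring
    rw [h1, Complex.exp_int_mul_two_pi_mul_I]
    simp

-- H7: Bernoulli-type bound
lemma quarter_le (k : ℕ) (hk : 1 ≤ k) :
    (1/4 : ℝ) ≤ (1 - 1/2^k)^(2^k) := by
  induction k with
  | zero => omega
  | succ k ih =>
    rcases Nat.eq_or_lt_of_le hk with h | h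
    · norm_num [← h]
    · have hk1 : 1 ≤ k := by omega
      have h2 : ((1:ℝ) - 1/2^(k+1))^(2^(k+1)) = ((1 - 1/2^(k+1))^2)^(2^k) := by
        rw [← pow_mul]; ring_nf
      rw [h2]
      refine le_trans (ih hk1) (pow_le_pow_left₀ ?_ ?_ _)
      · have : (1:ℝ)/2^k ≤ 1 := by
          rw [div_le_one (by positivity)]
          exact one_le_pow₀ one_le_two
        linarith
      · have hpos : (0:ℝ) < 2^(k+1) := by positivity
        have : ((1:ℝ) - 1/2^(k+1))^2 = 1 - 2/2^(k+1) + (1/2^(k+1))^2 := by ring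
        rw [this]
        have h3 : (2:ℝ)/2^(k+1) = 1/2^k := by
          rw [pow_succ]; field_simp
        rw [h3]
        nlinarith [sq_nonneg ((1:ℝ)/2^(k+1))]

noncomputable def DP (n : ℕ) : ℂ → ℂ := fun z => ∑ k ∈ Finset.Icc 1 n, ((2^k : ℕ) : ℂ) * z ^ (2^k - 1)

lemma hasDerivAt_Pn (n : ℕ) (z : ℂ) : HasDerivAt (Pn n) (DP n z) z := by
  have : HasDerivAt (Pn n) (∑ k ∈ Finset.Icc 1 n, ((2^k : ℕ) : ℂ) * z ^ (2^k - 1)) z := by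
    apply HasDerivAt.fun_sum
    intro k _
    simpa using hasDerivAt_pow (2^k) z
  simpa [DP] using this

lemma deriv_Pn (n : ℕ) : deriv (Pn n) = DP n := by
  funext z; exact (hasDerivAt_Pn n z).deriv

lemma continuous_DP (n : ℕ) : Continuous (DP n) := by
  unfold DP
  exact continuous_finset_sum _ fun k _ => continuous_const.mul (continuous_pow _)


lemma cont_term (r : ℝ) (c : ℂ) (e m : ℕ) :
    Continuous (fun t : ℝ => c * ((r:ℂ) * Complex.exp (t * Complex.I))^e *
      Complex.exp (-(m:ℂ) * (t * Complex.I))) := by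
  have h1 : Continuous (fun t : ℝ => ((t:ℂ) * Complex.I)) :=
    Complex.continuous_ofReal.mul continuous_const
  exact (continuous_const.mul ((continuous_const.mul h1.cexp).pow e)).mul
    ((continuous_const.mul h1).cexp)

lemma term_eval (r : ℝ) (c : ℂ) (e m : ℕ) :
    (∫ t in (0:ℝ)..(2*π), c * ((r:ℂ) * Complex.exp (t * Complex.I))^e *
      Complex.exp (-(m:ℂ) * (t * Complex.I)))
      = if e = m then c * (r:ℂ)^e * ((2*π:ℝ):ℂ) else 0 := by
  have h : ∀ t : ℝ, c * ((r:ℂ) * Complex.exp (t * Complex.I))^e *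
      Complex.exp (-(m:ℂ) * (t * Complex.I))
      = (c * (r:ℂ)^e) * Complex.exp (((e:ℂ) - m) * (t * Complex.I)) := by
    intro t
    have h2 : ((r:ℂ) * Complex.exp (t * Complex.I))^e
        = (r:ℂ)^e * Complex.exp ((e:ℂ) * (t * Complex.I)) := by
      rw [mul_pow, ← Complex.exp_nat_mul]
    rw [h2, show (((e:ℂ) - m) * ((t:ℂ) * Complex.I))
        = (e:ℂ) * ((t:ℂ) * Complex.I) + (-(m:ℂ) * ((t:ℂ) * Complex.I)) by ring,
      Complex.exp_add]
    ring
  simp_rw [h]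
  rw [intervalIntegral.integral_const_mul, key_orth]
  split_ifs <;> simp [mul_comm]

lemma pow_inj_iff {j k : ℕ} : (2:ℕ)^j = 2^k ↔ j = k :=
  ⟨fun h => Nat.pow_right_injective (le_refl 2) h, fun h => by rw [h]⟩

/-- Circle coefficient extraction for the derivative polynomial. -/
lemma circle_eval_DP (n : ℕ) (r : ℝ) (k0 : ℕ) (hk0 : k0 ∈ Finset.Icc 1 n) :
    (∫ t in (0:ℝ)..(2*π), DP n ((r:ℂ) * Complex.exp (t * Complex.I)) *
      Complex.exp (-(((2^k0 - 1 : ℕ)):ℂ) * (t * Complex.I)))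
      = ((2^k0 : ℕ):ℂ) * (r:ℂ)^(2^k0 - 1 : ℕ) * ((2*π:ℝ):ℂ) := by
  unfold DP
  simp_rw [Finset.sum_mul]
  rw [intervalIntegral.integral_finset_sum
    (fun k _ => (cont_term r ((2^k : ℕ):ℂ) (2^k - 1) (2^k0 - 1)).intervalIntegrable _ _)]
  simp_rw [term_eval]
  rw [Finset.sum_eq_single k0]
  · simp
  · intro k hk hne
    rw [if_neg]
    intro h
    have hk1 : 1 ≤ k := (Finset.mem_Icc.mp hk).1
    have hk01 : 1 ≤ k0 := (Finset.mem_Icc.mp hk0).1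
    have : (2:ℕ)^k = 2^k0 := by
      have e1 : 1 ≤ (2:ℕ)^k := Nat.one_le_two_pow
      have e2 : 1 ≤ (2:ℕ)^k0 := Nat.one_le_two_pow
      omega
    exact hne (pow_inj_iff.mp this)
  · intro h; exact absurd hk0 h

/-- Parseval for `Pn`. -/
lemma circle_eval_Pn (n : ℕ) (r : ℝ) (hr : 0 ≤ r) :
    (∫ t in (0:ℝ)..(2*π), ‖Pn n ((r:ℂ) * Complex.exp (t * Complex.I))‖^(2:ℕ))
      = 2*π * ∑ k ∈ Finset.Icc 1 n, r^(2^(k+1)) := by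
  set s := Finset.Icc 1 n
  set E : ℝ → ℂ := fun t => Complex.exp (t * Complex.I) with hE
  have hconj : ∀ t : ℝ, (starRingEnd ℂ) (Pn n ((r:ℂ) * E t))
      = ∑ k ∈ s, ((r:ℂ)^(2^k)) * Complex.exp (-((2^k : ℕ):ℂ) * (t * Complex.I)) := by
    intro t
    unfold Pn
    rw [map_sum]
    refine Finset.sum_congr rfl fun k _ => ?_
    rw [map_pow, map_mul, Complex.conj_ofReal, ← Complex.exp_conj]
    have : (starRingEnd ℂ) ((t:ℂ) * Complex.I) = -((t:ℂ) * Complex.I) := by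
      simp [Complex.conj_I]
    rw [this]
    rw [mul_pow, ← Complex.exp_nat_mul]
    congr 1
    push_cast
    ring
  have hprod : ∀ t : ℝ, Pn n ((r:ℂ) * E t) * (starRingEnd ℂ) (Pn n ((r:ℂ) * E t))
      = ∑ j ∈ s, ∑ k ∈ s, ((r:ℂ)^(2^k)) * ((r:ℂ) * E t)^(2^j) *
          Complex.exp (-((2^k : ℕ):ℂ) * (t * Complex.I)) := by
    intro t
    rw [hconj t]
    show (∑ j ∈ s, ((r:ℂ) * E t)^(2^j)) * _ = _
    rw [Finset.sum_mul_sum]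
    refine Finset.sum_congr rfl fun j _ => Finset.sum_congr rfl fun k _ => by ring
  have hcval : (∫ t in (0:ℝ)..(2*π), Pn n ((r:ℂ) * E t) * (starRingEnd ℂ) (Pn n ((r:ℂ) * E t)))
      = ((2*π * ∑ k ∈ s, r^(2^(k+1)) : ℝ) : ℂ) := by
    simp_rw [hprod]
    rw [intervalIntegral.integral_finset_sum (fun j _ => by
      exact (continuous_finset_sum s (fun k _ =>
        (cont_term r ((r:ℂ)^(2^k)) (2^j) (2^k)))).intervalIntegrable _ _)]
    rw [Finset.sum_congr rfl (fun j _ => intervalIntegral.integral_finset_sum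
      (fun k _ => (cont_term r ((r:ℂ)^(2^k)) (2^j) (2^k)).intervalIntegrable _ _))]
    simp_rw [term_eval]
    rw [Finset.sum_congr rfl (fun j hj => Finset.sum_eq_single j
      (fun k hk hne => by
        rw [if_neg]; intro h; exact hne (pow_inj_iff.mp h).symm)
      (fun h => absurd hj h))]
    push_cast
    rw [Finset.mul_sum]
    refine Finset.sum_congr rfl fun j _ => ?_
    rw [if_pos rfl]
    rw [pow_succ, pow_mul]
    push_cast
    ring
  have hre : ∀ t : ℝ, Pn n ((r:ℂ) * E t) * (starRingEnd ℂ) (Pn n ((r:ℂ) * E t))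
      = ((‖Pn n ((r:ℂ) * E t)‖^(2:ℕ) : ℝ) : ℂ) := by
    intro t
    rw [Complex.mul_conj]
    norm_cast
    rw [Complex.normSq_eq_norm_sq]
  have : ((∫ t in (0:ℝ)..(2*π), ‖Pn n ((r:ℂ) * E t)‖^(2:ℕ) : ℝ) : ℂ)
      = ((2*π * ∑ k ∈ s, r^(2^(k+1)) : ℝ) : ℂ) := by
    rw [← intervalIntegral.integral_ofReal]
    simp_rw [← hre]
    exact hcval
  exact_mod_cast this


lemma cont_inner (n : ℕ) : Continuous (fun p : ℝ × ℝ =>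
    DP n ((p.1:ℂ) * Complex.exp ((p.2:ℂ) * Complex.I))) := by
  apply (continuous_DP n).comp
  exact (Complex.continuous_ofReal.comp continuous_fst).mul
    ((Complex.continuous_ofReal.comp continuous_snd).mul continuous_const).cexp

lemma cont2d (n : ℕ) : Continuous (fun p : ℝ × ℝ =>
    p.1 * ‖DP n ((p.1:ℂ) * Complex.exp ((p.2:ℂ) * Complex.I))‖) :=
  continuous_fst.mul (cont_inner n).norm

lemma integrableOn_prodIoo {E : Type*} [NormedAddCommGroup E] {G : ℝ × ℝ → E}
    (hG : Continuous G) (a b c d : ℝ) : IntegrableOn G ((Ioo a b) ×ˢ (Ioo c d)) :=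
  (hG.continuousOn.integrableOn_compact (isCompact_Icc.prod isCompact_Icc)).mono_set
    (prod_mono Ioo_subset_Icc_self Ioo_subset_Icc_self)

lemma fubini_prodIoo {E : Type*} [NormedAddCommGroup E] [NormedSpace ℝ E]
    {G : ℝ × ℝ → E} (hG : Continuous G) (a b c d : ℝ) :
    ∫ p in (Ioo a b) ×ˢ (Ioo c d), G p = ∫ x in Ioo a b, ∫ y in Ioo c d, G (x, y) := by
  rw [Measure.volume_eq_prod]
  exact setIntegral_prod G (by rw [← Measure.volume_eq_prod]; exact integrableOn_prodIoo hG a b c d)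

lemma polar_symm_eq (p : ℝ × ℝ) :
    Complex.polarCoord.symm p = (p.1 : ℂ) * Complex.exp ((p.2:ℂ) * Complex.I) := by
  rw [Complex.polarCoord_symm_apply, Complex.exp_mul_I]
  simp [Complex.ofReal_cos, Complex.ofReal_sin]

lemma polar_area (n : ℕ) :
    (∫ z in ball (0:ℂ) 1, ‖deriv (Pn n) z‖)
      = ∫ p in (Ioo (0:ℝ) 1) ×ˢ (Ioo (-π) π),
          p.1 * ‖DP n ((p.1:ℂ) * Complex.exp ((p.2:ℂ) * Complex.I))‖ := by
  have h1 : (∫ z in ball (0:ℂ) 1, ‖deriv (Pn n) z‖)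
      = ∫ z, (ball (0:ℂ) 1).indicator (fun z => ‖DP n z‖) z := by
    rw [integral_indicator measurableSet_ball, deriv_Pn]
  rw [h1, ← Complex.integral_comp_polarCoord_symm]
  have htarget : polarCoord.target = (Ioi (0:ℝ)) ×ˢ (Ioo (-π) π) := rfl
  rw [htarget]
  have h2 : ∀ p ∈ (Ioi (0:ℝ)) ×ˢ (Ioo (-π) π),
      p.1 • (ball (0:ℂ) 1).indicator (fun z => ‖DP n z‖) (Complex.polarCoord.symm p)
      = ((Ioo (0:ℝ) 1) ×ˢ (Ioo (-π) π)).indicator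
          (fun p : ℝ × ℝ => p.1 * ‖DP n ((p.1:ℂ) * Complex.exp ((p.2:ℂ) * Complex.I))‖) p := by
    rintro ⟨r, θ⟩ ⟨hr, hθ⟩
    have hr' : (0:ℝ) < r := hr
    replace hr := hr'
    simp only [smul_eq_mul, polar_symm_eq]
    have hnorm : ‖(r:ℂ) * Complex.exp ((θ:ℂ) * Complex.I)‖ = r := by
      rw [norm_mul, Complex.norm_exp]
      simp [_root_.abs_of_nonneg hr.le]
    by_cases h : r < 1
    · rw [Set.indicator_of_mem, Set.indicator_of_mem]
      · exact ⟨⟨hr, h⟩, hθ⟩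
      · rw [mem_ball_zero_iff, hnorm]; exact h
    · rw [Set.indicator_of_notMem, Set.indicator_of_notMem, mul_zero]
      · intro hm; exact h hm.1.2
      · rw [mem_ball_zero_iff, hnorm]; exact h
  rw [setIntegral_congr_fun (measurableSet_Ioi.prod measurableSet_Ioo) h2]
  rw [setIntegral_indicator (measurableSet_Ioo.prod measurableSet_Ioo)]
  congr 1
  rw [Set.inter_eq_self_of_subset_right (prod_mono Ioo_subset_Ioi_self (subset_refl _))]


lemma per_integral {h : ℝ → ℂ} (hper : Function.Periodic h (2*π)) :
    ∫ θ in Ioo (-π) π, h θ = ∫ t in (0:ℝ)..(2*π), h t := by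
  rw [← integral_Ioc_eq_integral_Ioo,
    ← intervalIntegral.integral_of_le (by linarith [Real.pi_pos] : -π ≤ π)]
  have h2 := hper.intervalIntegral_add_eq (-π) 0
  rw [zero_add, show -π + 2*π = π by ring] at h2
  exact h2

lemma norm_exp_neg_mul (m : ℕ) (θ : ℝ) : ‖Complex.exp (-(m:ℂ) * ((θ:ℂ) * Complex.I))‖ = 1 := by
  rw [show -(m:ℂ) * ((θ:ℂ) * Complex.I) = ((-(m:ℝ) * θ : ℝ):ℂ) * Complex.I by push_cast; ring]
  rw [Complex.norm_exp_ofReal_mul_I]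

lemma sum_pow_le (n : ℕ) (r : ℝ) (hr0 : 0 ≤ r) (hr1 : r ≤ 1) :
    ∑ k ∈ Finset.Icc 1 n, r^(2^(k+1)) ≤ n := by
  calc ∑ k ∈ Finset.Icc 1 n, r^(2^(k+1)) ≤ ∑ k ∈ Finset.Icc 1 n, 1 :=
        Finset.sum_le_sum fun k _ => pow_le_one₀ hr0 hr1
    _ = n := by simp

lemma integral_Ioo_pow (m : ℕ) : ∫ x in Ioo (0:ℝ) 1, x^m = 1/(m+1) := by
  rw [← integral_Ioc_eq_integral_Ioo, ← intervalIntegral.integral_of_le zero_le_one,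
    integral_pow]
  simp

lemma upper_bound (n : ℕ) :
    (∫ p in (Ioo (0:ℝ) 1) ×ˢ (Ioo (-π) π),
        p.1 * ‖DP n ((p.1:ℂ) * Complex.exp ((p.2:ℂ) * Complex.I))‖) ≤ 2*π*n := by
  have hπ := Real.pi_pos
  set H : ℝ × ℝ → ℝ := fun p => ∑ k ∈ Finset.Icc 1 n, (2^k : ℝ) * p.1^(2^k) with hH
  have hHcont : Continuous H :=
    continuous_finset_sum _ fun k _ =>
      continuous_const.mul ((continuous_pow _).comp continuous_fst)
  have hmono : ∀ p ∈ (Ioo (0:ℝ) 1) ×ˢ (Ioo (-π) π),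
      p.1 * ‖DP n ((p.1:ℂ) * Complex.exp ((p.2:ℂ) * Complex.I))‖ ≤ H p := by
    rintro ⟨r, θ⟩ ⟨hr, hθ⟩
    have hr0 : (0:ℝ) < r := hr.1
    have hnorm : ‖(r:ℂ) * Complex.exp ((θ:ℂ) * Complex.I)‖ = r := by
      rw [norm_mul, Complex.norm_exp]
      simp [_root_.abs_of_nonneg hr0.le]
    have h1 : ‖DP n ((r:ℂ) * Complex.exp ((θ:ℂ) * Complex.I))‖
        ≤ ∑ k ∈ Finset.Icc 1 n, (2^k : ℝ) * r^(2^k - 1) := by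
      refine le_trans (norm_sum_le _ _) (Finset.sum_le_sum fun k _ => ?_)
      rw [norm_mul, norm_pow, hnorm]
      simp only [Complex.norm_natCast]
      push_cast
      exact le_refl _
    have h2 : r * (∑ k ∈ Finset.Icc 1 n, (2^k : ℝ) * r^(2^k - 1)) = H (r, θ) := by
      rw [Finset.mul_sum, hH]
      refine Finset.sum_congr rfl fun k hk => ?_
      have h3 : r * r^(2^k - 1) = r^(2^k) := by
        rw [← pow_succ']
        congr 1
        have : 1 ≤ 2^k := Nat.one_le_two_pow
        omega
      rw [← h3]; ring
    calc (r, θ).1 * ‖DP n (((r, θ).1:ℂ) * Complex.exp (((r, θ).2:ℂ) * Complex.I))‖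
        ≤ r * ∑ k ∈ Finset.Icc 1 n, (2^k : ℝ) * r^(2^k - 1) :=
          mul_le_mul_of_nonneg_left h1 hr0.le
      _ = H (r, θ) := h2
  have hint1 : IntegrableOn (fun p : ℝ × ℝ =>
      p.1 * ‖DP n ((p.1:ℂ) * Complex.exp ((p.2:ℂ) * Complex.I))‖)
      ((Ioo (0:ℝ) 1) ×ˢ (Ioo (-π) π)) := integrableOn_prodIoo (cont2d n) _ _ _ _
  have hint2 : IntegrableOn H ((Ioo (0:ℝ) 1) ×ˢ (Ioo (-π) π)) :=
    integrableOn_prodIoo hHcont _ _ _ _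
  refine le_trans (setIntegral_mono_on hint1 hint2
    ((measurableSet_Ioo.prod measurableSet_Ioo)) hmono) ?_
  rw [fubini_prodIoo hHcont]
  have hinner : ∀ x : ℝ, (∫ y in Ioo (-π) π, H (x, y)) = (2*π) * H (x, 0) := by
    intro x
    have hy : (fun y : ℝ => H (x, y)) = fun _ : ℝ => H (x, 0) := by
      funext y; simp [hH]
    calc (∫ y in Ioo (-π) π, H (x, y)) = ∫ _ in Ioo (-π) π, H (x, 0) := by rw [hy]
      _ = 2 * π * H (x, 0) := ?_
    rw [setIntegral_const, Real.volume_real_Ioo_of_le (by linarith), smul_eq_mul]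
    congr 1
    ring
  rw [setIntegral_congr_fun measurableSet_Ioo (fun x _ => hinner x)]
  have hintk : ∀ k : ℕ, IntegrableOn (fun x : ℝ => (2*π) * ((2^k:ℝ) * x^(2^k))) (Ioo 0 1) :=
    fun k => ((continuous_const.mul (continuous_const.mul (continuous_pow _))).continuousOn.integrableOn_compact
      isCompact_Icc).mono_set Ioo_subset_Icc_self
  have hsum : (fun x : ℝ => (2*π) * H (x, 0)) =
      fun x : ℝ => ∑ k ∈ Finset.Icc 1 n, (2*π) * ((2^k:ℝ) * x^(2^k)) := by
    funext x
    rw [hH, Finset.mul_sum]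
  rw [hsum, integral_finset_sum _ (fun k _ => hintk k)]
  have heach : ∀ k : ℕ, (∫ x in Ioo (0:ℝ) 1, (2*π) * ((2^k:ℝ) * x^(2^k))) ≤ 2*π := by
    intro k
    rw [integral_const_mul, integral_const_mul, integral_Ioo_pow]
    push_cast
    have h4 : (2:ℝ)^k * (1/((2:ℝ)^k + 1)) ≤ 1 := by
      rw [mul_one_div, div_le_one (by positivity)]
      linarith
    nlinarith
  calc (∑ k ∈ Finset.Icc 1 n, ∫ x in Ioo (0:ℝ) 1, (2*π) * ((2^k:ℝ) * x^(2^k)))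
      ≤ ∑ k ∈ Finset.Icc 1 n, 2*π := Finset.sum_le_sum fun k _ => heach k
    _ = 2*π*n := by simp [mul_comm]


lemma annulus_bound (n k : ℕ) (hk : k ∈ Finset.Icc 1 n) :
    π/4 ≤ ∫ p in (Ioo (1 - 1/2^k) (1 - 1/2^(k+1)) : Set ℝ) ×ˢ (Ioo (-π) π),
        p.1 * ‖DP n ((p.1:ℂ) * Complex.exp ((p.2:ℂ) * Complex.I))‖ := by
  have hπ := Real.pi_pos
  have hk1 : 1 ≤ k := (Finset.mem_Icc.mp hk).1
  set m : ℕ := 2^k - 1 with hm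
  set a : ℝ := 1 - 1/2^k with ha
  set b : ℝ := 1 - 1/2^(k+1) with hb
  have ha0 : (0:ℝ) < a := by
    rw [ha]
    have : (1:ℝ)/2^k ≤ 1/2 := by
      apply div_le_div_of_nonneg_left one_pos.le two_pos
      calc (2:ℝ) = 2^1 := (pow_one 2).symm
        _ ≤ 2^k := pow_le_pow_right₀ one_le_two hk1
    linarith
  have hab : a < b := by
    rw [ha, hb]
    have : (1:ℝ)/2^(k+1) < 1/2^k := by
      apply div_lt_div_of_pos_left one_pos (by positivity)
      exact pow_lt_pow_right₀ one_lt_two (Nat.lt_succ_self k)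
    linarith
  set G : ℝ × ℝ → ℂ := fun p => (p.1:ℂ) *
    (DP n ((p.1:ℂ) * Complex.exp ((p.2:ℂ) * Complex.I)) *
      Complex.exp (-(m:ℂ) * ((p.2:ℂ) * Complex.I))) with hG
  have hGcont : Continuous G := by
    apply (Complex.continuous_ofReal.comp continuous_fst).mul
    exact (cont_inner n).mul (continuous_const.mul
      ((Complex.continuous_ofReal.comp continuous_snd).mul continuous_const)).cexp
  -- step 1 : norms agree on S
  have hnorms : ∀ p ∈ (Ioo a b) ×ˢ (Ioo (-π) π), ‖G p‖ =
      p.1 * ‖DP n ((p.1:ℂ) * Complex.exp ((p.2:ℂ) * Complex.I))‖ := by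
    rintro ⟨r, θ⟩ ⟨hr, hθ⟩
    have hr0 : (0:ℝ) < r := lt_trans ha0 hr.1
    rw [hG]
    simp only [norm_mul, Complex.norm_real, Real.norm_eq_abs, norm_exp_neg_mul,
      _root_.abs_of_nonneg hr0.le, mul_one]
  -- step 3 : compute the integral of G
  have hper : ∀ r : ℝ, Function.Periodic (fun θ : ℝ =>
      DP n ((r:ℂ) * Complex.exp ((θ:ℂ) * Complex.I)) *
        Complex.exp (-(m:ℂ) * ((θ:ℂ) * Complex.I))) (2*π) := by
    intro r θ
    have e1 : (((θ + 2*π : ℝ)):ℂ) * Complex.I = (θ:ℂ) * Complex.I + 2*π*Complex.I := by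
      push_cast; ring
    have e2 : Complex.exp (((θ + 2*π : ℝ):ℂ) * Complex.I)
        = Complex.exp ((θ:ℂ) * Complex.I) := by
      rw [e1, Complex.exp_add, Complex.exp_two_pi_mul_I, mul_one]
    have e3 : Complex.exp (-(m:ℂ) * (((θ + 2*π : ℝ):ℂ) * Complex.I))
        = Complex.exp (-(m:ℂ) * ((θ:ℂ) * Complex.I)) := by
      rw [e1, mul_add, Complex.exp_add]
      have : -(m:ℂ) * (2*π*Complex.I) = ((-(m:ℤ) : ℤ):ℂ) * (2*π*Complex.I) := by
        push_cast; ring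
      rw [this, Complex.exp_int_mul_two_pi_mul_I, mul_one]
    simp only [e2, e3]
  have hinner : ∀ r : ℝ, (∫ θ in Ioo (-π) π,
      DP n ((r:ℂ) * Complex.exp ((θ:ℂ) * Complex.I)) *
        Complex.exp (-(m:ℂ) * ((θ:ℂ) * Complex.I)))
      = ((2^k : ℕ):ℂ) * (r:ℂ)^m * ((2*π:ℝ):ℂ) := by
    intro r
    rw [per_integral (hper r)]
    exact circle_eval_DP n r k hk
  have hval : (∫ p in (Ioo a b) ×ˢ (Ioo (-π) π), G p)
      = ((∫ r in Ioo a b, 2*π * (2^k : ℝ) * r^(2^k) : ℝ) : ℂ) := by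
    rw [fubini_prodIoo hGcont]
    have : ∀ r : ℝ, (∫ θ in Ioo (-π) π, G (r, θ))
        = ((2*π * (2^k : ℝ) * r^(2^k) : ℝ) : ℂ) := by
      intro r
      rw [hG]
      simp only
      rw [integral_const_mul, hinner r]
      have hmr : (r:ℂ)^(2^k) = (r:ℂ) * (r:ℂ)^m := by
        rw [hm, ← pow_succ']
        congr 1
        have : 1 ≤ 2^k := Nat.one_le_two_pow
        omega
      push_cast
      rw [hmr]
      ring
    rw [setIntegral_congr_fun measurableSet_Ioo (fun r _ => this r)]
    exact integral_ofReal
  -- step 4 : lower bound on the real integral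
  have hreal : π/4 ≤ ∫ r in Ioo a b, 2*π * (2^k : ℝ) * r^(2^k) := by
    have hmono : ∀ r ∈ Ioo a b, 2*π * (2^k : ℝ) * (1/4) ≤ 2*π * (2^k : ℝ) * r^(2^k) := by
      intro r hr
      have h1 : (1/4 : ℝ) ≤ r^(2^k) := by
        refine le_trans (quarter_le k hk1) ?_
        exact pow_le_pow_left₀ ha0.le hr.1.le _
      have h2 : (0:ℝ) < 2*π*(2^k : ℝ) := by positivity
      nlinarith
    have hint : IntegrableOn (fun r : ℝ => 2*π * (2^k : ℝ) * r^(2^k)) (Ioo a b) :=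
      ((continuous_const.mul (continuous_pow _)).continuousOn.integrableOn_compact
        isCompact_Icc).mono_set Ioo_subset_Icc_self
    have hc : (∫ _ in Ioo a b, (2*π * (2^k : ℝ) * (1/4) : ℝ)) = π/4 := by
      rw [setIntegral_const, Real.volume_real_Ioo_of_le hab.le, smul_eq_mul]
      have hba : b - a = 1/2^(k+1) := by
        rw [ha, hb, pow_succ]
        field_simp
        ring
      rw [hba, pow_succ]
      field_simp
    rw [← hc]
    exact setIntegral_mono_on (integrableOn_const (by
      rw [Real.volume_Ioo]; exact ENNReal.ofReal_ne_top))
      hint measurableSet_Ioo hmono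
  -- combine
  have hfin : ‖∫ p in (Ioo a b) ×ˢ (Ioo (-π) π), G p‖
      ≤ ∫ p in (Ioo a b) ×ˢ (Ioo (-π) π),
          p.1 * ‖DP n ((p.1:ℂ) * Complex.exp ((p.2:ℂ) * Complex.I))‖ := by
    refine le_trans (norm_integral_le_integral_norm G) ?_
    rw [setIntegral_congr_fun (measurableSet_Ioo.prod measurableSet_Ioo) hnorms]
  refine le_trans ?_ hfin
  rw [hval]
  rw [Complex.norm_real, Real.norm_eq_abs]
  exact le_trans hreal (le_abs_self _)


lemma lower_bound (n : ℕ) :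
    (π/4) * n ≤ ∫ p in (Ioo (0:ℝ) 1) ×ˢ (Ioo (-π) π),
        p.1 * ‖DP n ((p.1:ℂ) * Complex.exp ((p.2:ℂ) * Complex.I))‖ := by
  have hπ := Real.pi_pos
  set F : ℝ × ℝ → ℝ := fun p =>
    p.1 * ‖DP n ((p.1:ℂ) * Complex.exp ((p.2:ℂ) * Complex.I))‖ with hF
  set t : ℕ → Set (ℝ × ℝ) := fun k =>
    (Ioo (1 - 1/2^k) (1 - 1/2^(k+1)) : Set ℝ) ×ˢ (Ioo (-π) π) with ht
  have hmeas : ∀ k, MeasurableSet (t k) := fun k =>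
    measurableSet_Ioo.prod measurableSet_Ioo
  have hdisjIoo : ∀ k l : ℕ, k < l →
      Disjoint (Ioo (1 - 1/2^k) (1 - 1/2^(k+1)) : Set ℝ)
        (Ioo (1 - 1/2^l) (1 - 1/2^(l+1))) := by
    intro k l hkl
    rw [Set.disjoint_left]
    rintro x ⟨_, hx2⟩ ⟨hx3, _⟩
    have h1 : (1:ℝ)/2^l ≤ 1/2^(k+1) := by
      apply div_le_div_of_nonneg_left one_pos.le (by positivity)
      exact pow_le_pow_right₀ one_le_two hkl
    linarith
  have hprodDisj : ∀ k l : ℕ, k < l → Disjoint (t k) (t l) := by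
    intro k l h
    rw [Set.disjoint_left]
    rintro ⟨x, y⟩ hx1 hx2
    exact (Set.disjoint_left.mp (hdisjIoo k l h)) hx1.1 hx2.1
  have hdisj : (↑(Finset.Icc 1 n) : Set ℕ).Pairwise (Function.onFun Disjoint t) := by
    intro k _ l _ hkl
    rcases lt_or_gt_of_ne hkl with h | h
    · exact hprodDisj k l h
    · exact (hprodDisj l k h).symm
  have hsub : ∀ k ∈ Finset.Icc 1 n, t k ⊆ (Ioo (0:ℝ) 1) ×ˢ (Ioo (-π) π) := by
    intro k hk
    have hk1 : 1 ≤ k := (Finset.mem_Icc.mp hk).1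
    apply Set.prod_mono _ (subset_refl _)
    rintro x ⟨hx1, hx2⟩
    constructor
    · have : (1:ℝ)/2^k ≤ 1 := by
        rw [div_le_one (by positivity)]; exact one_le_pow₀ one_le_two
      linarith
    · have : (0:ℝ) < 1/2^(k+1) := by positivity
      linarith
  have hintQ : IntegrableOn F ((Ioo (0:ℝ) 1) ×ˢ (Ioo (-π) π)) :=
    integrableOn_prodIoo (cont2d n) _ _ _ _
  have hUsub : (⋃ k ∈ Finset.Icc 1 n, t k) ⊆ (Ioo (0:ℝ) 1) ×ˢ (Ioo (-π) π) :=
    Set.iUnion₂_subset hsub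
  have hintU : IntegrableOn F (⋃ k ∈ Finset.Icc 1 n, t k) := hintQ.mono_set hUsub
  have hsplit : (∑ k ∈ Finset.Icc 1 n, ∫ p in t k, F p)
      = ∫ p in (⋃ k ∈ Finset.Icc 1 n, t k), F p :=
    (integral_biUnion_finset (Finset.Icc 1 n) (fun k _ => hmeas k) hdisj
      (fun k hk => hintU.mono_set (Set.subset_biUnion_of_mem hk))).symm
  have hstep : (∫ p in (⋃ k ∈ Finset.Icc 1 n, t k), F p)
      ≤ ∫ p in (Ioo (0:ℝ) 1) ×ˢ (Ioo (-π) π), F p := by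
    apply setIntegral_mono_set hintQ
    · rw [Filter.EventuallyLE, ae_restrict_iff' (measurableSet_Ioo.prod measurableSet_Ioo)]
      refine Filter.Eventually.of_forall ?_
      rintro ⟨r, θ⟩ ⟨hr, _⟩
      exact mul_nonneg hr.1.le (norm_nonneg _)
    · exact Filter.Eventually.of_forall hUsub
  calc (π/4) * n = ∑ _k ∈ Finset.Icc 1 n, π/4 := by
        simp [Finset.sum_const, Nat.card_Icc]; ring
    _ ≤ ∑ k ∈ Finset.Icc 1 n, ∫ p in t k, F p :=
        Finset.sum_le_sum fun k hk => annulus_bound n k hk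
    _ = ∫ p in (⋃ k ∈ Finset.Icc 1 n, t k), F p := hsplit
    _ ≤ _ := hstep


lemma geo_sum_le (n : ℕ) : ∑ k ∈ Finset.Icc 1 n, (2:ℝ)^(k+1) ≤ 2^(n+2) := by
  induction n with
  | zero => norm_num
  | succ n ih =>
    rw [Finset.sum_Icc_succ_top (by omega : 1 ≤ n + 1)]
    have : (2:ℝ)^(n+1+2) = 2^(n+2) + 2^(n+2) := by ring
    rw [this]
    exact add_le_add ih (by norm_num [pow_succ])

lemma sum_pow_ge (n : ℕ) (r : ℝ) (hr0 : 0 ≤ r) (hr1 : r ≤ 1) :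
    (n : ℝ) - (1 - r) * 2^(n+2) ≤ ∑ k ∈ Finset.Icc 1 n, r^(2^(k+1)) := by
  have h1 : ∀ k ∈ Finset.Icc 1 n, (1:ℝ) - 2^(k+1) * (1 - r) ≤ r^(2^(k+1)) := by
    intro k _
    have := one_add_mul_le_pow (by linarith : (-2:ℝ) ≤ r - 1) (2^(k+1))
    rw [show (1:ℝ) + (r - 1) = r by ring] at this
    calc (1:ℝ) - 2^(k+1) * (1 - r) = 1 + (2^(k+1) : ℕ) * (r - 1) := by push_cast; ring
      _ ≤ r^(2^(k+1)) := this
  calc (n : ℝ) - (1 - r) * 2^(n+2)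
      ≤ (n : ℝ) - (1 - r) * ∑ k ∈ Finset.Icc 1 n, (2:ℝ)^(k+1) := by
        have := geo_sum_le n
        nlinarith [sub_nonneg.mpr hr1]
    _ = ∑ k ∈ Finset.Icc 1 n, ((1:ℝ) - 2^(k+1) * (1 - r)) := by
        rw [Finset.sum_sub_distrib]
        congr 1
        · simp [Nat.card_Icc]
        · rw [Finset.mul_sum]
          exact Finset.sum_congr rfl fun k _ => by ring
    _ ≤ _ := Finset.sum_le_sum h1

lemma circInt_Pn_eq (n : ℕ) (r : ℝ) (hr : 0 ≤ r) :
    circInt (Pn n) 2 r = ∑ k ∈ Finset.Icc 1 n, r^(2^(k+1)) := by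
  unfold circInt
  have hpt : ∀ t : ℝ, ‖Pn n ((r:ℂ) * Complex.exp ((t:ℂ) * Complex.I))‖ ^ (2:ℝ)
      = ‖Pn n ((r:ℂ) * Complex.exp ((t:ℂ) * Complex.I))‖ ^ (2:ℕ) := by
    intro t
    rw [← Real.rpow_natCast]
    norm_num
  simp_rw [hpt]
  rw [circle_eval_Pn n r hr]
  have hπ : (2*π : ℝ) ≠ 0 := by positivity
  field_simp

instance : Nonempty (Ioo (0:ℝ) 1) := ⟨⟨1/2, by norm_num⟩⟩

lemma hardy_eq (n : ℕ) (hn : 1 ≤ n) : hardyNorm 2 (Pn n) = Real.sqrt n := by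
  have hπ := Real.pi_pos
  have hg : ∀ r : Ioo (0:ℝ) 1, (circInt (Pn n) 2 (r:ℝ)) ^ ((1:ℝ)/(2:ℝ))
      = Real.sqrt (∑ k ∈ Finset.Icc 1 n, (r:ℝ)^(2^(k+1))) := by
    intro r
    rw [circInt_Pn_eq n r r.2.1.le, Real.sqrt_eq_rpow]
  have hbdd : ∀ r : Ioo (0:ℝ) 1, (circInt (Pn n) 2 (r:ℝ)) ^ ((1:ℝ)/(2:ℝ)) ≤ Real.sqrt n := by
    intro r
    rw [hg r]
    exact Real.sqrt_le_sqrt (sum_pow_le n r r.2.1.le r.2.2.le)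
  have hBdd : BddAbove (range fun r : Ioo (0:ℝ) 1 =>
      (circInt (Pn n) 2 (r:ℝ)) ^ ((1:ℝ)/(2:ℝ))) := by
    refine ⟨Real.sqrt n, ?_⟩
    rintro x ⟨r, rfl⟩
    exact hbdd r
  unfold hardyNorm
  apply le_antisymm
  · exact ciSup_le hbdd
  · have key : ∀ δ : ℝ, 0 < δ → Real.sqrt ((n:ℝ) - δ)
        ≤ ⨆ r : Ioo (0:ℝ) 1, (circInt (Pn n) 2 (r:ℝ)) ^ ((1:ℝ)/(2:ℝ)) := by
      intro δ hδ
      set ε : ℝ := min (1/2) (δ/2^(n+2)) with hε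
      have hε0 : 0 < ε := lt_min (by norm_num) (by positivity)
      have hε1 : ε ≤ 1/2 := min_le_left _ _
      have hε2 : ε ≤ δ/2^(n+2) := min_le_right _ _
      set r : ℝ := 1 - ε with hrdef
      have hrIoo : r ∈ Ioo (0:ℝ) 1 := ⟨by rw [hrdef]; linarith, by rw [hrdef]; linarith⟩
      have hS : (n:ℝ) - δ ≤ ∑ k ∈ Finset.Icc 1 n, r^(2^(k+1)) := by
        refine le_trans ?_ (sum_pow_ge n r (by rw [hrdef]; linarith) (by rw [hrdef]; linarith))
        have h2 : ((1:ℝ) - r) * 2^(n+2) = ε * 2^(n+2) := by rw [hrdef]; ring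
        rw [h2]
        have h3 : ε * 2^(n+2) ≤ δ := by
          calc ε * 2^(n+2) ≤ (δ/2^(n+2)) * 2^(n+2) :=
                mul_le_mul_of_nonneg_right hε2 (by positivity)
            _ = δ := by field_simp
        linarith
      calc Real.sqrt ((n:ℝ) - δ) ≤ Real.sqrt (∑ k ∈ Finset.Icc 1 n, r^(2^(k+1))) :=
            Real.sqrt_le_sqrt hS
        _ = (circInt (Pn n) 2 ((⟨r, hrIoo⟩ : Ioo (0:ℝ) 1) : ℝ)) ^ ((1:ℝ)/(2:ℝ)) :=
            (hg ⟨r, hrIoo⟩).symm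
        _ ≤ _ := le_ciSup hBdd ⟨r, hrIoo⟩
    have htend : Filter.Tendsto (fun δ : ℝ => Real.sqrt ((n:ℝ) - δ))
        (nhdsWithin 0 (Ioi 0)) (nhds (Real.sqrt n)) := by
      have hc : Continuous (fun δ : ℝ => Real.sqrt ((n:ℝ) - δ)) :=
        Real.continuous_sqrt.comp (continuous_const.sub continuous_id)
      have := hc.tendsto 0
      rw [show (n:ℝ) - 0 = n by ring] at this
      exact this.mono_left nhdsWithin_le_nhds
    refine le_of_tendsto htend ?_
    filter_upwards [self_mem_nhdsWithin] with δ hδ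
    exact key δ hδ

theorem stmt19 :
    ∃ c₁ c₂ c : ℝ, 0 < c₁ ∧ 0 < c₂ ∧ 0 < c ∧ ∀ n : ℕ, 1 ≤ n →
      (c₁ * n ≤ ∫ z in ball (0:ℂ) 1, ‖deriv (Pn n) z‖) ∧
      ((∫ z in ball (0:ℂ) 1, ‖deriv (Pn n) z‖) ≤ c₂ * n) ∧
      hardyNorm 2 (Pn n) = Real.sqrt n ∧
      c * Real.sqrt n ≤ (∫ z in ball (0:ℂ) 1, ‖deriv (Pn n) z‖) / hardyNorm 2 (Pn n) := by
  have hπ := Real.pi_pos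
  refine ⟨π/4, 2*π, π/4, by positivity, by positivity, by positivity, ?_⟩
  intro n hn
  have hA := polar_area n
  have hlow : (π/4) * n ≤ ∫ z in ball (0:ℂ) 1, ‖deriv (Pn n) z‖ := by
    rw [hA]; exact lower_bound n
  have hup : (∫ z in ball (0:ℂ) 1, ‖deriv (Pn n) z‖) ≤ 2*π*n := by
    rw [hA]; exact upper_bound n
  have hH := hardy_eq n hn
  refine ⟨hlow, hup, hH, ?_⟩
  rw [hH]
  have hs : (0:ℝ) < Real.sqrt n := Real.sqrt_pos.mpr (by
    have : (0:ℕ) < n := by omega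
    exact_mod_cast this)
  rw [le_div_iff₀ hs]
  calc π/4 * Real.sqrt n * Real.sqrt n = π/4 * n := by
        rw [mul_assoc, Real.mul_self_sqrt (Nat.cast_nonneg n)]
    _ ≤ _ := hlow
end
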